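/- arXiv:2512.08357 — 7 statements merged into one kernel-verified Lean document; each statement's English description precedes it below -/
import Mathlib

section
/- For all integers n, m, d ≥ 1 the following identities hold in 𝒢: (1) T_n · T_m = T_{lcm(n,m)}; (2) m_d(T_n) = T_{n/gcd(d,n)}; (3) d_{1/d}(T_n) = T_{n·d}. In particular each T_n is idempotent. -/
noncomputable section

/-- `G = (ℝ/ℤ)^r`. -/
abbrev Gr (r : ℕ) : Type := Fin r → AddCircle (1 : ℝ)

/-- The group algebra `𝒢 = ℚ[G]`. -/
abbrev GA (r : ℕ) : Type := AddMonoidAlgebra ℚ (Gr r)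

/-- The multiplication operator `m_d`, the ℚ-linear operator determined by
`m_d((θ)) = (d • θ)`. -/
noncomputable def mulOp (r : ℕ) (d : ℤ) : GA r →ₗ[ℚ] GA r :=
  AddMonoidAlgebra.mapDomainLinearMap ℚ ℚ (fun θ : Gr r => d • θ)

/-- The division operator `d_{1/d}`, the ℚ-linear operator determined by
`d_{1/d}((θ)) = d^{-r} • ∑_{τ : d • τ = θ} (τ)`. -/
noncomputable def divOp (r d : ℕ) : GA r →ₗ[ℚ] GA r :=
  (Finsupp.lsum ℚ fun θ : Gr r =>
    LinearMap.toSpanSingleton ℚ (GA r)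
      (((d : ℚ) ^ r)⁻¹ • ∑ᶠ τ ∈ {τ : Gr r | d • τ = θ}, AddMonoidAlgebra.single τ (1 : ℚ))) ∘ₗ
    (AddMonoidAlgebra.coeffLinearEquiv ℚ).toLinearMap

/-- `T_n := d_{1/n}((0))`, the average of the `n`-torsion elements of `G`. -/
noncomputable def Tor (r n : ℕ) : GA r := divOp r n (AddMonoidAlgebra.single 0 1)

open AddCircle


lemma circ_tors_eq_range {n : ℕ} (hn : 0 < n) :
    {u : AddCircle (1:ℝ) | n • u = 0} =
      Set.range (fun k : Fin n => (((k:ℝ)/n : ℝ) : AddCircle (1:ℝ))) := by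
  ext u
  simp only [Set.mem_setOf_eq, Set.mem_range]
  constructor
  · intro hu
    induction u using QuotientAddGroup.induction_on with
    | H x =>
      rw [← AddCircle.coe_nsmul, AddCircle.coe_eq_zero_iff] at hu
      obtain ⟨a, ha⟩ := hu
      have hn' : (n:ℝ) ≠ 0 := Nat.cast_ne_zero.mpr hn.ne'
      have hx : x = (a : ℝ) / n := by
        field_simp
        rw [mul_comm]
        simpa [nsmul_eq_mul, smul_eq_mul] using ha.symm
      refine ⟨⟨(a % n).toNat, ?_⟩, ?_⟩
      · have := Int.emod_lt_of_pos a (b := n) (by exact_mod_cast hn)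
        omega
      · have hmod : ((a % n).toNat : ℝ) = (a:ℝ) - (a / n : ℤ) * n := by
          have h1 : ((a % n).toNat : ℤ) = a % n :=
            Int.toNat_of_nonneg (Int.emod_nonneg _ (by exact_mod_cast hn.ne'))
          have h2 : ((a % n).toNat : ℤ) = a - (a / n) * n := by
            rw [h1, Int.emod_def]; ring
          exact_mod_cast congrArg (Int.cast : ℤ → ℝ) h2
        have : ((a % n).toNat : ℝ) / n = x - (a / n : ℤ) * 1 := by
          rw [hmod, hx]; field_simp
        rw [Fin.val_mk, this]
        simp [AddCircle.coe_sub, sub_eq_zero, ← AddCircle.coe_zsmul, zsmul_eq_mul]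
  · rintro ⟨k, rfl⟩
    have hn' : (n:ℝ) ≠ 0 := Nat.cast_ne_zero.mpr hn.ne'
    rw [← AddCircle.coe_nsmul, AddCircle.coe_eq_zero_iff]
    exact ⟨k, by simp [nsmul_eq_mul, zsmul_eq_mul]; field_simp⟩

lemma circ_inj {n : ℕ} (hn : 0 < n) :
    Function.Injective (fun k : Fin n => (((k:ℝ)/n : ℝ) : AddCircle (1:ℝ))) := by
  intro k k' h
  simp only at h
  have hn' : (n:ℝ) ≠ 0 := Nat.cast_ne_zero.mpr hn.ne'
  rw [← sub_eq_zero, ← AddCircle.coe_sub, ← sub_div, AddCircle.coe_eq_zero_iff] at h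
  obtain ⟨m, hm⟩ := h
  have : ((k:ℤ) - k' : ℝ) = (m * n : ℤ) := by
    push_cast
    field_simp at hm
    push_cast at hm
    simp only [zsmul_eq_mul, mul_one] at hm
    linarith [hm]
  have h2 : (k:ℤ) - k' = m * n := by exact_mod_cast this
  have : (k:ℤ) - k' = 0 := by
    refine Int.eq_zero_of_abs_lt_dvd (m := (n:ℤ)) ⟨m, by rw [h2]; ring⟩ ?_
    have := k.2; have := k'.2
    rw [abs_sub_lt_iff]; omega
  ext; omega

lemma circ_tors_finite {n : ℕ} (hn : 0 < n) :
    {u : AddCircle (1:ℝ) | n • u = 0}.Finite := by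
  rw [circ_tors_eq_range hn]; exact Set.finite_range _

lemma circ_tors_ncard {n : ℕ} (hn : 0 < n) :
    Nat.card {u : AddCircle (1:ℝ) | n • u = 0} = n := by
  rw [circ_tors_eq_range hn, Nat.card_range_of_injective (circ_inj hn), Nat.card_eq_fintype_card,
    Fintype.card_fin]

def tset (r n : ℕ) : Set (Gr r) := {τ | n • τ = 0}

lemma mem_tset {r n : ℕ} {τ : Gr r} : τ ∈ tset r n ↔ n • τ = 0 := Iff.rfl

lemma tset_eq_pi (r n : ℕ) :
    tset r n = Set.univ.pi (fun _ : Fin r => {u : AddCircle (1:ℝ) | n • u = 0}) := by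
  ext τ
  constructor
  · intro h i _
    simpa using congrFun h i
  · intro h
    funext i
    simpa using h i (Set.mem_univ i)

lemma tset_finite {r n : ℕ} (hn : 0 < n) : (tset r n).Finite := by
  rw [tset_eq_pi]
  exact Set.Finite.pi (fun _ => circ_tors_finite hn)

lemma tset_ncard {r n : ℕ} (hn : 0 < n) : (tset r n).ncard = n ^ r := by
  rw [← Nat.card_coe_set_eq, tset_eq_pi,
    Nat.card_congr (Equiv.Set.univPi _), Nat.card_pi]
  simp only [circ_tors_ncard hn]
  rw [Finset.prod_const, Finset.card_univ, Fintype.card_fin]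

lemma zero_mem_tset {r n : ℕ} : (0 : Gr r) ∈ tset r n := by simp [mem_tset]

lemma tset_add {r n : ℕ} {a b : Gr r} (ha : a ∈ tset r n) (hb : b ∈ tset r n) :
    a + b ∈ tset r n := by
  simp only [mem_tset, smul_add] at *
  rw [ha, hb, add_zero]

lemma tset_neg {r n : ℕ} {a : Gr r} (ha : a ∈ tset r n) : -a ∈ tset r n := by
  simp only [mem_tset, smul_neg] at *
  rw [ha, neg_zero]

lemma tset_sub {r n : ℕ} {a b : Gr r} (ha : a ∈ tset r n) (hb : b ∈ tset r n) :
    a - b ∈ tset r n := by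
  rw [sub_eq_add_neg]; exact tset_add ha (tset_neg hb)

lemma tset_zsmul {r n : ℕ} {a : Gr r} (ha : a ∈ tset r n) (c : ℤ) :
    c • a ∈ tset r n := by
  simp only [mem_tset] at *
  rw [smul_comm, ha, smul_zero]

lemma mem_tset_zsmul {r n : ℕ} {τ : Gr r} : τ ∈ tset r n ↔ (n : ℤ) • τ = 0 := by
  rw [mem_tset, natCast_zsmul]

lemma tset_mono {r : ℕ} {a b : ℕ} (h : a ∣ b) : tset r a ⊆ tset r b := by
  intro τ hτ
  obtain ⟨c, rfl⟩ := h
  rw [mem_tset, mul_comm, mul_smul, hτ, smul_zero]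

lemma tset_inter {r : ℕ} (a b : ℕ) : tset r a ∩ tset r b = tset r (Nat.gcd a b) := by
  ext τ
  constructor
  · rintro ⟨ha, hb⟩
    rw [mem_tset_zsmul, Nat.gcd_eq_gcd_ab, add_smul, mul_comm (a:ℤ), mul_comm (b:ℤ),
      mul_smul, mul_smul, mem_tset_zsmul.mp ha, mem_tset_zsmul.mp hb,
      smul_zero, smul_zero, add_zero]
  · intro h
    exact ⟨tset_mono (Nat.gcd_dvd_left a b) h, tset_mono (Nat.gcd_dvd_right a b) h⟩

lemma exists_nsmul_eq {r d : ℕ} (hd : 0 < d) (θ : Gr r) : ∃ ρ : Gr r, d • ρ = θ := by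
  refine ⟨DivisibleBy.div θ (d : ℤ), ?_⟩
  rw [← natCast_zsmul]
  exact DivisibleBy.div_cancel θ (by exact_mod_cast hd.ne')

lemma fiber_eq {r d : ℕ} {θ ρ : Gr r} (hρ : d • ρ = θ) :
    {τ : Gr r | d • τ = θ} = (fun σ => ρ + σ) '' tset r d := by
  ext τ
  simp only [Set.mem_setOf_eq, Set.mem_image, mem_tset]
  constructor
  · intro h
    exact ⟨τ - ρ, by rw [smul_sub, h, hρ, sub_self], by abel⟩
  · rintro ⟨σ, hσ, rfl⟩
    rw [smul_add, hρ, hσ, add_zero]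

lemma fiber_finite {r d : ℕ} (hd : 0 < d) (θ : Gr r) : {τ : Gr r | d • τ = θ}.Finite := by
  obtain ⟨ρ, hρ⟩ := exists_nsmul_eq hd θ
  rw [fiber_eq hρ]
  exact (tset_finite hd).image _

lemma fiber_ncard {r d : ℕ} (hd : 0 < d) (θ : Gr r) :
    {τ : Gr r | d • τ = θ}.ncard = d ^ r := by
  obtain ⟨ρ, hρ⟩ := exists_nsmul_eq hd θ
  rw [fiber_eq hρ, Set.ncard_image_of_injective _ (add_right_injective ρ), tset_ncard hd]

-- generic counting lemma
lemma sum_comp_card {α β M : Type*} [AddCommMonoid M] [DecidableEq β]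
    (s : Finset α) (t : Finset β) (g : α → β) (F : β → M) (c : ℕ)
    (hmaps : ∀ x ∈ s, g x ∈ t)
    (hcard : ∀ y ∈ t, (s.filter fun x => g x = y).card = c) :
    ∑ x ∈ s, F (g x) = c • ∑ y ∈ t, F y := by
  classical
  rw [← Finset.sum_fiberwise_of_maps_to hmaps (fun x => F (g x)), Finset.smul_sum]
  refine Finset.sum_congr rfl fun y hy => ?_
  rw [Finset.sum_congr rfl (fun x hx => by rw [(Finset.mem_filter.mp hx).2]),
    Finset.sum_const, hcard y hy]

lemma divOp_single {r d : ℕ} (hd : 0 < d) (θ : Gr r) :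
    divOp r d (AddMonoidAlgebra.single θ 1) =
      ((d : ℚ) ^ r)⁻¹ • ∑ τ ∈ (fiber_finite hd θ).toFinset, AddMonoidAlgebra.single τ (1 : ℚ) := by
  rw [divOp, LinearMap.comp_apply]
  rw [LinearEquiv.coe_coe, AddMonoidAlgebra.coeffLinearEquiv_apply, AddMonoidAlgebra.coeff_single]
  erw [Finsupp.lsum_single]
  rw [LinearMap.toSpanSingleton_apply, one_smul,
    finsum_mem_eq_finite_toFinset_sum _ (fiber_finite hd θ)]

lemma Tor_eq {r n : ℕ} (hn : 0 < n) :
    Tor r n = ((n : ℚ) ^ r)⁻¹ • ∑ τ ∈ (tset_finite hn).toFinset, AddMonoidAlgebra.single τ (1 : ℚ) := by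
  rw [Tor, divOp_single hn 0]
  rfl

lemma divOp_Tor {r n d : ℕ} (hn : 0 < n) (hd : 0 < d) :
    divOp r d (Tor r n) = Tor r (n * d) := by
  classical
  rw [Tor_eq hn, map_smul, map_sum, Tor_eq (Nat.mul_pos hn hd)]
  have h1 : ∀ θ ∈ (tset_finite hn).toFinset,
      divOp r d (AddMonoidAlgebra.single θ (1:ℚ)) =
        ((d : ℚ) ^ r)⁻¹ • ∑ τ ∈ (fiber_finite hd θ).toFinset, AddMonoidAlgebra.single τ (1 : ℚ) :=
    fun θ _ => divOp_single hd θ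
  rw [Finset.sum_congr rfl h1, ← Finset.smul_sum, smul_smul]
  have hmaps : ∀ τ ∈ (tset_finite (r := r) (Nat.mul_pos hn hd)).toFinset,
      d • τ ∈ (tset_finite (r := r) hn).toFinset := by
    intro τ hτ
    simp only [Set.Finite.mem_toFinset, mem_tset] at hτ ⊢
    rw [← mul_smul]
    exact hτ
  have key : ∑ θ ∈ (tset_finite (r := r) hn).toFinset,
      ∑ τ ∈ (fiber_finite hd θ).toFinset, AddMonoidAlgebra.single τ (1:ℚ)
      = ∑ τ ∈ (tset_finite (r := r) (Nat.mul_pos hn hd)).toFinset, AddMonoidAlgebra.single τ (1:ℚ) := by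
    rw [← Finset.sum_fiberwise_of_maps_to hmaps (fun τ => AddMonoidAlgebra.single τ (1:ℚ))]
    refine Finset.sum_congr rfl fun θ hθ => ?_
    apply Finset.sum_congr _ (fun _ _ => rfl)
    ext τ
    simp only [Set.Finite.mem_toFinset, Set.mem_setOf_eq, Finset.mem_filter,
      Set.Finite.mem_toFinset, mem_tset]
    constructor
    · rintro h
      refine ⟨?_, h⟩
      have hθ' : θ ∈ tset r n := (Set.Finite.mem_toFinset _).mp hθ
      rw [mul_smul, h]
      exact mem_tset.mp hθ'
    · exact fun h => h.2
  rw [key]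
  congr 1
  have hn' : ((n:ℚ)) ≠ 0 := Nat.cast_ne_zero.mpr hn.ne'
  have hd' : ((d:ℚ)) ≠ 0 := Nat.cast_ne_zero.mpr hd.ne'
  push_cast
  rw [mul_pow, mul_inv]

-- Surjectivity: multiplication by d maps n-torsion onto (n/gcd d n)-torsion.
lemma exists_smul_eq_of_mem {r d n : ℕ} (hd : 0 < d) (hn : 0 < n) {y : Gr r}
    (hy : y ∈ tset r (n / Nat.gcd d n)) : ∃ θ ∈ tset r n, d • θ = y := by
  set g := Nat.gcd d n with hg
  have hg0 : 0 < g := Nat.gcd_pos_of_pos_left _ hd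
  set d' := d / g with hd'
  set n' := n / g with hn'
  have hdg : d = g * d' := (Nat.mul_div_cancel' (Nat.gcd_dvd_left d n)).symm
  have hng : n = g * n' := (Nat.mul_div_cancel' (Nat.gcd_dvd_right d n)).symm
  have hcop : Nat.Coprime d' n' := Nat.coprime_div_gcd_div_gcd hg0
  -- Bezout: 1 = d' * a + n' * b
  have hbez : (1 : ℤ) = d' * Nat.gcdA d' n' + n' * Nat.gcdB d' n' := by
    have := Nat.gcd_eq_gcd_ab d' n'
    rwa [hcop, Nat.cast_one] at this
  set a := Nat.gcdA d' n'
  set b := Nat.gcdB d' n'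
  obtain ⟨ρ, hρ⟩ := exists_nsmul_eq hg0 (a • y)
  have hρz : (g : ℤ) • ρ = a • y := by rwa [natCast_zsmul]
  have hyz : (n' : ℤ) • y = 0 := mem_tset_zsmul.mp hy
  refine ⟨ρ, ?_, ?_⟩
  · rw [mem_tset_zsmul]
    have : ((n : ℕ) : ℤ) = (n' : ℤ) * g := by rw [hng]; push_cast; ring
    rw [this, mul_smul, hρz, smul_comm, hyz, smul_zero]
  · rw [← natCast_zsmul]
    have : ((d : ℕ) : ℤ) = (d' : ℤ) * g := by rw [hdg]; push_cast; ring
    rw [this, mul_smul, hρz, smul_smul, mul_comm (d':ℤ) a]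
    have h1 : a * (d' : ℤ) = 1 - n' * b := by rw [hbez]; ring
    rw [h1, sub_smul, one_smul, mul_smul, smul_comm ((n':ℕ):ℤ) b, hyz, smul_zero, sub_zero]

lemma mulOp_Tor {r d n : ℕ} (hd : 0 < d) (hn : 0 < n) :
    mulOp r (d : ℤ) (Tor r n) = Tor r (n / Nat.gcd d n) := by
  classical
  set g := Nat.gcd d n with hg
  have hg0 : 0 < g := Nat.gcd_pos_of_pos_left _ hd
  set n' := n / g with hn'
  have hn'0 : 0 < n' := Nat.div_pos (Nat.le_of_dvd hn (Nat.gcd_dvd_right d n)) hg0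
  have hng : n = g * n' := (Nat.mul_div_cancel' (Nat.gcd_dvd_right d n)).symm
  rw [Tor_eq hn, map_smul, map_sum, Tor_eq hn'0]
  have hsingle : ∀ θ : Gr r, mulOp r (d : ℤ) (AddMonoidAlgebra.single θ (1:ℚ))
      = AddMonoidAlgebra.single (d • θ) (1:ℚ) := by
    intro θ
    rw [mulOp, AddMonoidAlgebra.mapDomainLinearMap_single]
    rw [natCast_zsmul]
  rw [Finset.sum_congr rfl (fun θ _ => hsingle θ)]
  have hmaps : ∀ θ ∈ (tset_finite (r := r) hn).toFinset,
      d • θ ∈ (tset_finite (r := r) hn'0).toFinset := by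
    intro θ hθ
    simp only [Set.Finite.mem_toFinset] at hθ ⊢
    rw [mem_tset, ← mul_smul]
    have h1 : g * n' = n := Nat.mul_div_cancel' (Nat.gcd_dvd_right d n)
    have h2 : g * (d / g) = d := Nat.mul_div_cancel' (Nat.gcd_dvd_left d n)
    have : n' * d = (d / g) * n := by
      calc n' * d = n' * (g * (d / g)) := by rw [h2]
        _ = (d / g) * (g * n') := by ring
        _ = (d / g) * n := by rw [h1]
    rw [this, mul_smul, mem_tset.mp hθ, smul_zero]
  have hcard : ∀ y ∈ (tset_finite (r := r) hn'0).toFinset,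
      (((tset_finite (r := r) hn).toFinset).filter fun θ => d • θ = y).card = g ^ r := by
    intro y hy
    rw [Set.Finite.mem_toFinset] at hy
    obtain ⟨θ₀, hθ₀, hdθ₀⟩ := exists_smul_eq_of_mem hd hn hy
    have hsetEq : {θ ∈ (tset r n) | d • θ = y} = (fun σ => θ₀ + σ) '' tset r g := by
      ext θ
      simp only [Set.mem_setOf_eq, Set.mem_image]
      constructor
      · rintro ⟨h1, h2⟩
        refine ⟨θ - θ₀, ?_, by abel⟩
        rw [← tset_inter]
        refine ⟨?_, tset_sub h1 hθ₀⟩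
        rw [mem_tset, smul_sub, h2, hdθ₀, sub_self]
      · rintro ⟨σ, hσ, rfl⟩
        have hσd : σ ∈ tset r d := tset_mono (Nat.gcd_dvd_left d n) hσ
        have hσn : σ ∈ tset r n := tset_mono (Nat.gcd_dvd_right d n) hσ
        exact ⟨tset_add hθ₀ hσn, by rw [smul_add, hdθ₀, mem_tset.mp hσd, add_zero]⟩
    have : ((((tset_finite (r := r) hn).toFinset).filter fun θ => d • θ = y) : Set (Gr r))
        = {θ ∈ (tset r n) | d • θ = y} := by
      rw [Finset.coe_filter]
      simp [Set.Finite.mem_toFinset]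
    calc (((tset_finite (r := r) hn).toFinset).filter fun θ => d • θ = y).card
        = ((((tset_finite (r := r) hn).toFinset).filter fun θ => d • θ = y) : Set (Gr r)).ncard := by
          rw [Set.ncard_coe_finset]
      _ = g ^ r := by
          rw [this, hsetEq, Set.ncard_image_of_injective _ (add_right_injective θ₀),
            tset_ncard hg0]
  rw [sum_comp_card ((tset_finite hn).toFinset) ((tset_finite hn'0).toFinset)
    (fun θ => d • θ) (fun τ => AddMonoidAlgebra.single τ (1:ℚ)) (g ^ r) hmaps hcard]
  rw [smul_comm, ← Nat.cast_smul_eq_nsmul ℚ (g ^ r), smul_smul]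
  congr 1
  have hgq : ((g:ℚ)) ≠ 0 := Nat.cast_ne_zero.mpr hg0.ne'
  have hnq : ((n':ℚ)) ≠ 0 := Nat.cast_ne_zero.mpr hn'0.ne'
  have : (n : ℚ) = g * n' := by rw [hng]; push_cast; ring
  rw [this]
  field_simp
  push_cast
  ring

-- surjectivity of addition map onto lcm-torsion
lemma exists_add_eq_of_mem {r n m : ℕ} (hn : 0 < n) (hm : 0 < m) {κ : Gr r}
    (hκ : κ ∈ tset r (Nat.lcm n m)) :
    ∃ θ ∈ tset r n, ∃ τ ∈ tset r m, θ + τ = κ := by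
  set g := Nat.gcd n m with hg
  have hg0 : 0 < g := Nat.gcd_pos_of_pos_left _ hn
  set A := Nat.gcdA n m
  set B := Nat.gcdB n m
  have hbez : (g : ℤ) = n * A + m * B := Nat.gcd_eq_gcd_ab n m
  have hgn : g * (n / g) = n := Nat.mul_div_cancel' (Nat.gcd_dvd_left n m)
  have hgm : g * (m / g) = m := Nat.mul_div_cancel' (Nat.gcd_dvd_right n m)
  have hlcm1 : n * (m / g) = Nat.lcm n m := by
    rw [Nat.lcm, ← hg, Nat.mul_div_assoc n (Nat.gcd_dvd_right n m)]
  have hlcm2 : m * (n / g) = Nat.lcm n m := by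
    rw [Nat.lcm, ← hg]
    rw [mul_comm n m, Nat.mul_div_assoc m (Nat.gcd_dvd_left n m)]
  have hκz : ((Nat.lcm n m : ℕ) : ℤ) • κ = 0 := mem_tset_zsmul.mp hκ
  refine ⟨(B * (m / g : ℕ)) • κ, ?_, (A * (n / g : ℕ)) • κ, ?_, ?_⟩
  · rw [mem_tset_zsmul, smul_smul]
    have : (n : ℤ) * (B * (m / g : ℕ)) = B * (Nat.lcm n m : ℕ) := by
      rw [← hlcm1]; push_cast; ring
    rw [this, mul_smul, hκz, smul_zero]
  · rw [mem_tset_zsmul, smul_smul]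
    have : (m : ℤ) * (A * (n / g : ℕ)) = A * (Nat.lcm n m : ℕ) := by
      rw [← hlcm2]; push_cast; ring
    rw [this, mul_smul, hκz, smul_zero]
  · rw [← add_smul]
    have hone : B * ((m / g : ℕ) : ℤ) + A * ((n / g : ℕ) : ℤ) = 1 := by
      have hcancel : (g : ℤ) * (B * ((m / g : ℕ) : ℤ) + A * ((n / g : ℕ) : ℤ)) = g * 1 := by
        have e1 : (g : ℤ) * ((m / g : ℕ) : ℤ) = (m : ℤ) := by
          exact_mod_cast congrArg (Nat.cast : ℕ → ℤ) hgm
        have e2 : (g : ℤ) * ((n / g : ℕ) : ℤ) = (n : ℤ) := by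
          exact_mod_cast congrArg (Nat.cast : ℕ → ℤ) hgn
        calc (g : ℤ) * (B * ((m / g : ℕ) : ℤ) + A * ((n / g : ℕ) : ℤ))
            = B * ((g : ℤ) * ((m / g : ℕ) : ℤ)) + A * ((g : ℤ) * ((n / g : ℕ) : ℤ)) := by ring
          _ = (n : ℤ) * A + (m : ℤ) * B := by rw [e1, e2]; ring
          _ = g := hbez.symm
          _ = g * 1 := by ring
      exact mul_left_cancel₀ (by exact_mod_cast hg0.ne') hcancel
    rw [hone, one_smul]

lemma Tor_mul_Tor {r n m : ℕ} (hn : 0 < n) (hm : 0 < m) :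
    Tor r n * Tor r m = Tor r (Nat.lcm n m) := by
  classical
  set g := Nat.gcd n m with hg
  have hg0 : 0 < g := Nat.gcd_pos_of_pos_left _ hn
  have hl0 : 0 < Nat.lcm n m := Nat.pos_of_ne_zero (Nat.lcm_ne_zero hn.ne' hm.ne')
  rw [Tor_eq hn, Tor_eq hm, Tor_eq hl0, smul_mul_smul_comm, Finset.sum_mul_sum]
  have hss : ∀ (θ τ : Gr r), (HMul.hMul (α := GA r) (β := GA r) (γ := GA r)
      (AddMonoidAlgebra.single θ (1:ℚ)) (AddMonoidAlgebra.single τ (1:ℚ))) = AddMonoidAlgebra.single (θ + τ) (1:ℚ) := by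
    intro θ τ
    have := AddMonoidAlgebra.single_mul_single θ τ (1:ℚ) (1:ℚ)
    simpa using this
  rw [Finset.sum_congr rfl (fun θ _ => Finset.sum_congr rfl (fun τ _ => hss θ τ))]
  rw [← Finset.sum_product']
  have hmaps : ∀ p ∈ (tset_finite (r := r) hn).toFinset ×ˢ (tset_finite (r := r) hm).toFinset,
      p.1 + p.2 ∈ (tset_finite (r := r) hl0).toFinset := by
    rintro ⟨θ, τ⟩ hp
    rw [Finset.mem_product] at hp
    simp only [Set.Finite.mem_toFinset] at hp ⊢
    exact tset_add (tset_mono (Nat.dvd_lcm_left n m) hp.1) (tset_mono (Nat.dvd_lcm_right n m) hp.2)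
  have hcard : ∀ κ ∈ (tset_finite (r := r) hl0).toFinset,
      (((tset_finite (r := r) hn).toFinset ×ˢ (tset_finite (r := r) hm).toFinset).filter
        fun p => p.1 + p.2 = κ).card = g ^ r := by
    intro κ hκ
    rw [Set.Finite.mem_toFinset] at hκ
    obtain ⟨θ₀, hθ₀, τ₀, hτ₀, hsum⟩ := exists_add_eq_of_mem hn hm hκ
    have hinj : Function.Injective (fun σ : Gr r => (θ₀ + σ, τ₀ - σ)) := by
      intro a b hab
      simpa using congrArg (fun p : Gr r × Gr r => p.1 - θ₀) hab
    have hsetEq : {p ∈ (tset r n) ×ˢ (tset r m) | p.1 + p.2 = κ}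
        = (fun σ : Gr r => (θ₀ + σ, τ₀ - σ)) '' tset r g := by
      ext ⟨θ, τ⟩
      simp only [Set.mem_setOf_eq, Set.mem_image, Set.mem_prod]
      constructor
      · rintro ⟨⟨h1, h2⟩, h3⟩
        have h5 : θ₀ + τ₀ = θ + τ := hsum.trans h3.symm
        refine ⟨θ - θ₀, ?_, ?_⟩
        · rw [← tset_inter]
          refine ⟨tset_sub h1 hθ₀, ?_⟩
          have hts : θ - θ₀ = τ₀ - τ := by
            rw [sub_eq_sub_iff_add_eq_add, h3, ← hsum]
            exact add_comm _ _
          rw [hts]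
          exact tset_sub hτ₀ h2
        · have h4 : τ₀ - (θ - θ₀) = τ := by
            calc τ₀ - (θ - θ₀) = (θ₀ + τ₀) - θ := by abel
              _ = (θ + τ) - θ := by rw [h5]
              _ = τ := by abel
          simp only [Prod.mk.injEq]
          exact ⟨by abel, h4⟩
      · rintro ⟨σ, hσ, heq⟩
        have hθeq : θ = θ₀ + σ := (congrArg Prod.fst heq).symm
        have hτeq : τ = τ₀ - σ := (congrArg Prod.snd heq).symm
        subst hθeq; subst hτeq
        have hσn : σ ∈ tset r n := tset_mono (Nat.gcd_dvd_left n m) hσ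
        have hσm : σ ∈ tset r m := tset_mono (Nat.gcd_dvd_right n m) hσ
        refine ⟨⟨tset_add hθ₀ hσn, tset_sub hτ₀ hσm⟩, ?_⟩
        rw [← hsum]; abel
    calc (((tset_finite (r := r) hn).toFinset ×ˢ (tset_finite (r := r) hm).toFinset).filter
        fun p => p.1 + p.2 = κ).card
        = ((((tset_finite (r := r) hn).toFinset ×ˢ (tset_finite (r := r) hm).toFinset).filter
            fun p => p.1 + p.2 = κ : Finset (Gr r × Gr r)) : Set (Gr r × Gr r)).ncard := by
          rw [Set.ncard_coe_finset]
      _ = g ^ r := by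
          have hcoe : ((((tset_finite (r := r) hn).toFinset ×ˢ (tset_finite (r := r) hm).toFinset).filter
              fun p => p.1 + p.2 = κ : Finset (Gr r × Gr r)) : Set (Gr r × Gr r))
              = {p ∈ (tset r n) ×ˢ (tset r m) | p.1 + p.2 = κ} := by
            rw [Finset.coe_filter]
            ext ⟨θ, τ⟩
            simp [Set.Finite.mem_toFinset, Finset.mem_product, Set.mem_prod]
          rw [hcoe, hsetEq, Set.ncard_image_of_injective _ hinj, tset_ncard hg0]
  rw [sum_comp_card ((tset_finite (r := r) hn).toFinset ×ˢ (tset_finite (r := r) hm).toFinset)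
    ((tset_finite (r := r) hl0).toFinset) (fun p => p.1 + p.2)
    (fun κ => AddMonoidAlgebra.single κ (1:ℚ)) (g ^ r) hmaps hcard]
  rw [smul_comm, ← Nat.cast_smul_eq_nsmul ℚ (g ^ r), smul_smul]
  congr 1
  have hgq : ((g:ℚ)) ≠ 0 := Nat.cast_ne_zero.mpr hg0.ne'
  have hnq : ((n:ℚ)) ≠ 0 := Nat.cast_ne_zero.mpr hn.ne'
  have hmq : ((m:ℚ)) ≠ 0 := Nat.cast_ne_zero.mpr hm.ne'
  have hlq : ((Nat.lcm n m : ℚ)) ≠ 0 := Nat.cast_ne_zero.mpr hl0.ne'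
  have hkey : (g : ℚ) * (Nat.lcm n m : ℚ) = (n : ℚ) * m := by
    exact_mod_cast congrArg (Nat.cast : ℕ → ℚ) (Nat.gcd_mul_lcm n m)
  field_simp
  push_cast
  calc (g:ℚ) ^ r * (Nat.lcm n m : ℚ) ^ r = ((g:ℚ) * (Nat.lcm n m : ℚ)) ^ r := by ring
    _ = ((n:ℚ) * m) ^ r := by rw [hkey]
    _ = (n:ℚ) ^ r * (m:ℚ) ^ r := by ring

/-- (1) `T_n · T_m = T_{lcm(n,m)}`; (2) `m_d(T_n) = T_{n/gcd(d,n)}`;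
(3) `d_{1/d}(T_n) = T_{n·d}`. In particular each `T_n` is idempotent. -/
theorem statement1 (r : ℕ) (hr : 1 ≤ r) (n m d : ℕ)
    (hn : 1 ≤ n) (hm : 1 ≤ m) (hd : 1 ≤ d) :
    Tor r n * Tor r m = Tor r (Nat.lcm n m) ∧
    mulOp r (d : ℤ) (Tor r n) = Tor r (n / Nat.gcd d n) ∧
    divOp r d (Tor r n) = Tor r (n * d) ∧
    Tor r n * Tor r n = Tor r n := by
  refine ⟨Tor_mul_Tor hn hm, mulOp_Tor hd hn, divOp_Tor hn hd, ?_⟩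
  rw [Tor_mul_Tor hn hn, Nat.lcm_self]

end
end

section
/- SL₂(ℤ) acts transitively on the elements of Z_n² of a given additive order: for every n ≥ 1 and all x, y ∈ Z_n² with addOrderOf x = addOrderOf y, there exists A ∈ SL₂(ℤ) such that A · x = y. -/
lemma step1 (a b : ℤ) : ∃ A : Matrix.SpecialLinearGroup (Fin 2) ℤ,
    A.1 0 0 * a + A.1 0 1 * b = Int.gcd a b ∧ A.1 1 0 * a + A.1 1 1 * b = 0 := by
  rcases eq_or_ne (Int.gcd a b) 0 with hg | hg
  · have ha : a = 0 := Int.gcd_eq_zero_iff.mp hg |>.1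
    have hb : b = 0 := Int.gcd_eq_zero_iff.mp hg |>.2
    exact ⟨1, by simp [ha, hb, hg]⟩
  · set g : ℤ := (Int.gcd a b : ℤ) with hgdef
    have hg' : g ≠ 0 := by simpa [hgdef] using hg
    have hda : g ∣ a := Int.gcd_dvd_left a b
    have hdb : g ∣ b := Int.gcd_dvd_right a b
    have hbez : g = a * Int.gcdA a b + b * Int.gcdB a b := Int.gcd_eq_gcd_ab a b
    have h1 : Int.gcdA a b * (a / g) + Int.gcdB a b * (b / g) = 1 := by
      have h2 : g * (Int.gcdA a b * (a / g) + Int.gcdB a b * (b / g)) = g * 1 := by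
        rw [mul_add, mul_one,
            show g * (Int.gcdA a b * (a / g)) = Int.gcdA a b * (g * (a/g)) by ring,
            show g * (Int.gcdB a b * (b / g)) = Int.gcdB a b * (g * (b/g)) by ring,
            Int.mul_ediv_cancel' hda, Int.mul_ediv_cancel' hdb]
        linarith [hbez]
      exact mul_left_cancel₀ hg' h2
    refine ⟨⟨!![Int.gcdA a b, Int.gcdB a b; -(b / g), a / g], ?_⟩, ?_, ?_⟩
    · simp only [Matrix.det_fin_two_of]
      nlinarith [h1, Int.ediv_mul_cancel hda, Int.ediv_mul_cancel hdb]
    · show !![Int.gcdA a b, Int.gcdB a b; -(b / g), a / g] 0 0 * a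
        + !![Int.gcdA a b, Int.gcdB a b; -(b / g), a / g] 0 1 * b = g
      simp only [Matrix.cons_val', Matrix.cons_val_zero, Matrix.empty_val',
        Matrix.cons_val_fin_one, Matrix.cons_val_one, Matrix.head_cons, Matrix.head_fin_const,
        Matrix.of_apply]
      linarith [hbez]
    · show !![Int.gcdA a b, Int.gcdB a b; -(b / g), a / g] 1 0 * a
        + !![Int.gcdA a b, Int.gcdB a b; -(b / g), a / g] 1 1 * b = 0
      simp only [Matrix.cons_val', Matrix.cons_val_zero, Matrix.empty_val',
        Matrix.cons_val_fin_one, Matrix.cons_val_one, Matrix.head_cons, Matrix.head_fin_const,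
        Matrix.of_apply]
      obtain ⟨a', ha'⟩ := hda
      obtain ⟨b', hb'⟩ := hdb
      rw [ha', hb', Int.mul_ediv_cancel_left _ hg', Int.mul_ediv_cancel_left _ hg']
      ring

/-- Step 2: an SL₂(ℤ) matrix sending (g,0) to (gcd g n, 0) mod n. -/
lemma step2 (n : ℕ) [NeZero n] (g : ℤ) : ∃ A : Matrix.SpecialLinearGroup (Fin 2) ℤ,
    A.1 0 0 * g ≡ (Int.gcd g n : ℤ) [ZMOD n] ∧ A.1 1 0 * g ≡ 0 [ZMOD n] := by
  have hn : (n : ℤ) ≠ 0 := by exact_mod_cast (NeZero.ne n)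
  set d : ℤ := (Int.gcd g n : ℤ) with hd
  have hd0 : d ≠ 0 := by
    simp only [hd, ne_eq, Int.natCast_eq_zero, Int.gcd_eq_zero_iff, not_and]
    intro _; exact_mod_cast NeZero.ne n
  have hdg : d ∣ g := Int.gcd_dvd_left g n
  have hdn : d ∣ (n : ℤ) := Int.gcd_dvd_right g n
  set e : ℤ := g / d with he
  set m : ℕ := n / Int.gcd g n with hm
  have hdn' : Int.gcd g n ∣ n := by
    have := hdn; rw [hd] at this; exact_mod_cast this
  have hmn : m ∣ n := Nat.div_dvd_of_dvd hdn'
  have hdm : d * m = n := by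
    rw [hd, hm]
    exact_mod_cast Nat.mul_div_cancel' hdn'
  have hde : d * e = g := Int.mul_ediv_cancel' hdg
  -- e is coprime to m
  have hcop : IsCoprime e (m : ℤ) := by
    rw [Int.isCoprime_iff_gcd_eq_one]
    have : Int.gcd (g / d) ((n : ℤ) / d) = 1 := by
      apply Int.gcd_div_gcd_div_gcd
      exact Nat.pos_of_ne_zero (by simpa [hd] using hd0)
    have hmd : (m : ℤ) = (n : ℤ) / d := by
      rw [← hdm]; push_cast
      rw [Int.mul_ediv_cancel_left _ hd0]
    rw [← he] at this
    rw [hmd]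
    exact this
  -- get c with c * e ≡ 1 mod m
  obtain ⟨c, c', hcc⟩ := hcop
  -- (c : ZMod m) is a unit
  have hunit : (c : ZMod m) * (e : ZMod m) = 1 := by
    have : ((c * e + c' * m : ℤ) : ZMod m) = ((1 : ℤ) : ZMod m) := by rw [hcc]
    push_cast at this
    simpa using this
  let w' : (ZMod m)ˣ := Units.mkOfMulEqOne _ _ hunit
  obtain ⟨w, hw⟩ := ZMod.unitsMap_surjective hmn w'
  set t : ℤ := ((w : ZMod n).val : ℤ) with ht
  have htcop : IsCoprime t (n : ℤ) := by
    rw [Int.isCoprime_iff_gcd_eq_one, Int.gcd_natCast_natCast]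
    exact ZMod.val_coe_unit_coprime w
  -- t ≡ c mod m
  have htc : t ≡ c [ZMOD m] := by
    rw [← ZMod.intCast_eq_intCast_iff]
    have h2 : (t : ZMod n) = (w : ZMod n) := by
      rw [ht]; push_cast [ZMod.natCast_zmod_val]; rfl
    calc (t : ZMod m) = ZMod.castHom hmn (ZMod m) ((t : ZMod n)) := (map_intCast _ _).symm
      _ = ZMod.castHom hmn (ZMod m) ((w : ZMod n)) := by rw [h2]
      _ = ((ZMod.unitsMap hmn w : (ZMod m)ˣ) : ZMod m) := rfl
      _ = (c : ZMod m) := by rw [hw]; rfl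
  -- t * g ≡ d mod n
  have hkey : t * g ≡ d [ZMOD n] := by
    have h3 : t * e ≡ c * e [ZMOD m] := htc.mul_right e
    have h4 : c * e ≡ 1 [ZMOD m] := by
      have : ((c * e : ℤ) : ZMod m) = ((1 : ℤ) : ZMod m) := by push_cast; simpa using hunit
      exact (ZMod.intCast_eq_intCast_iff _ _ _).mp this
    have h5 : t * e ≡ 1 [ZMOD m] := h3.trans h4
    have h6 : (m : ℤ) ∣ t * e - 1 := Int.ModEq.dvd h5.symm
    obtain ⟨k, hk⟩ := h6
    have : t * g - d = (n : ℤ) * k := by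
      rw [← hde, ← hdm]
      push_cast
      nlinarith [hk]
    exact Int.ModEq.symm (Int.modEq_iff_dvd.mpr ⟨k, by linarith [this]⟩)
  -- Bezout for t and n
  obtain ⟨u, v, huv⟩ := htcop
  refine ⟨⟨!![t, -v; (n : ℤ), u], ?_⟩, ?_, ?_⟩
  · simp only [Matrix.det_fin_two_of]
    linarith [huv]
  · show !![t, -v; (n : ℤ), u] 0 0 * g ≡ d [ZMOD n]
    simpa using hkey
  · show !![t, -v; (n : ℤ), u] 1 0 * g ≡ 0 [ZMOD n]
    simp only [Matrix.cons_val', Matrix.cons_val_zero, Matrix.empty_val',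
      Matrix.cons_val_fin_one, Matrix.cons_val_one, Matrix.head_cons, Matrix.head_fin_const,
      Matrix.of_apply]
    exact (Int.modEq_iff_dvd.mpr ⟨-g, by ring⟩)

/-- The action of a matrix `A ∈ SL₂(ℤ)` on `Z_n² = ZMod n × ZMod n`, given by
reducing the matrix modulo `n` and multiplying vectors. -/
def sl2Hom (n : ℕ) (A : Matrix.SpecialLinearGroup (Fin 2) ℤ) :
    (ZMod n × ZMod n) →+ (ZMod n × ZMod n) where
  toFun x := (((A.1 0 0 : ℤ) : ZMod n) * x.1 + ((A.1 0 1 : ℤ) : ZMod n) * x.2,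
              ((A.1 1 0 : ℤ) : ZMod n) * x.1 + ((A.1 1 1 : ℤ) : ZMod n) * x.2)
  map_zero' := by simp
  map_add' x y := by
    simp only [Prod.fst_add, Prod.snd_add, Prod.mk_add_mk, Prod.mk.injEq]
    constructor <;> ring

lemma sl2Hom_mul (n : ℕ) (A B : Matrix.SpecialLinearGroup (Fin 2) ℤ) (v : ZMod n × ZMod n) :
    sl2Hom n (A * B) v = sl2Hom n A (sl2Hom n B v) := by
  simp only [sl2Hom, AddMonoidHom.coe_mk, ZeroHom.coe_mk, Matrix.SpecialLinearGroup.coe_mul,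
    Matrix.mul_apply, Fin.sum_univ_succ, Fin.sum_univ_zero, add_zero, Fin.succ_zero_eq_one]
  rw [Prod.mk.injEq]
  constructor <;> push_cast <;> ring

lemma sl2Hom_one (n : ℕ) (v : ZMod n × ZMod n) : sl2Hom n 1 v = v := by
  simp [sl2Hom]

lemma order_eq (n : ℕ) [NeZero n] (x : ZMod n × ZMod n) :
    addOrderOf x = n / Nat.gcd (Nat.gcd x.1.val x.2.val) n := by
  set a := x.1.val with hadef
  set b := x.2.val with hbdef
  set d := Nat.gcd (Nat.gcd a b) n with hddef
  have hdn : d ∣ n := Nat.gcd_dvd_right _ _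
  have hda : d ∣ a := (Nat.gcd_dvd_left _ _).trans (Nat.gcd_dvd_left _ _)
  have hdb : d ∣ b := (Nat.gcd_dvd_left _ _).trans (Nat.gcd_dvd_right _ _)
  have hd0 : 0 < d := Nat.gcd_pos_of_pos_right _ (Nat.pos_of_ne_zero (NeZero.ne n))
  have hx : x = ((a : ZMod n), (b : ZMod n)) := by
    rw [hadef, hbdef, ZMod.natCast_zmod_val, ZMod.natCast_zmod_val]
  have smul_eq : ∀ k : ℕ, k • x = (((k * a : ℕ) : ZMod n), ((k * b : ℕ) : ZMod n)) := by
    intro k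
    rw [hx, Prod.smul_mk]
    push_cast
    simp [nsmul_eq_mul]
  apply Nat.dvd_antisymm
  · apply addOrderOf_dvd_of_nsmul_eq_zero
    rw [smul_eq, Prod.mk_eq_zero, ZMod.natCast_eq_zero_iff,
      ZMod.natCast_eq_zero_iff]
    obtain ⟨a', ha'⟩ := hda
    obtain ⟨b', hb'⟩ := hdb
    constructor
    · exact ⟨a', by rw [ha', ← mul_assoc, Nat.div_mul_cancel hdn]⟩
    · exact ⟨b', by rw [hb', ← mul_assoc, Nat.div_mul_cancel hdn]⟩
  · set k := addOrderOf x with hk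
    have hzero : k • x = 0 := addOrderOf_nsmul_eq_zero x
    rw [smul_eq, Prod.mk_eq_zero, ZMod.natCast_eq_zero_iff,
      ZMod.natCast_eq_zero_iff] at hzero
    have h1 : n ∣ Nat.gcd (k * a) (k * b) := Nat.dvd_gcd hzero.1 hzero.2
    rw [Nat.gcd_mul_left] at h1
    have h2 : n ∣ k * d := by
      rw [hddef, ← Nat.gcd_mul_left]
      exact Nat.dvd_gcd h1 ⟨k, by ring⟩
    have h3 : d * (n / d) ∣ d * k := by
      rw [Nat.mul_div_cancel' hdn, mul_comm d k]
      exact h2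
    exact (Nat.mul_dvd_mul_iff_left hd0).mp h3
lemma sl2Hom_apply (n : ℕ) (A : Matrix.SpecialLinearGroup (Fin 2) ℤ) (v : ZMod n × ZMod n) :
    sl2Hom n A v = (((A.1 0 0 : ℤ) : ZMod n) * v.1 + ((A.1 0 1 : ℤ) : ZMod n) * v.2,
              ((A.1 1 0 : ℤ) : ZMod n) * v.1 + ((A.1 1 1 : ℤ) : ZMod n) * v.2) := rfl

lemma reduce (n : ℕ) [NeZero n] (z : ZMod n × ZMod n) :
    ∃ A : Matrix.SpecialLinearGroup (Fin 2) ℤ,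
      sl2Hom n A z = (((Nat.gcd (Nat.gcd z.1.val z.2.val) n : ℕ) : ZMod n), 0) := by
  set a : ℤ := (z.1.val : ℤ) with ha
  set b : ℤ := (z.2.val : ℤ) with hb
  obtain ⟨B, hB1, hB2⟩ := step1 a b
  set g : ℤ := (Int.gcd a b : ℤ) with hg
  obtain ⟨C, hC1, hC2⟩ := step2 n g
  refine ⟨C * B, ?_⟩
  have hz1 : z.1 = ((a : ℤ) : ZMod n) := by rw [ha]; push_cast [ZMod.natCast_zmod_val]; rfl
  have hz2 : z.2 = ((b : ℤ) : ZMod n) := by rw [hb]; push_cast [ZMod.natCast_zmod_val]; rfl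
  have hBz : sl2Hom n B z = (((g : ℤ) : ZMod n), 0) := by
    rw [sl2Hom_apply, hz1, hz2]
    rw [Prod.mk.injEq]
    constructor
    · rw [← hB1]; push_cast; ring
    · rw [show (0 : ZMod n) = ((0 : ℤ) : ZMod n) by push_cast; rfl, ← hB2]; push_cast; ring
  rw [sl2Hom_mul, hBz, sl2Hom_apply]
  simp only [mul_zero, add_zero]
  rw [Prod.mk.injEq]
  have hgcd : Int.gcd g n = Nat.gcd (Nat.gcd z.1.val z.2.val) n := by
    rw [hg, ha, hb, Int.gcd_natCast_natCast]
    exact_mod_cast Int.gcd_natCast_natCast _ _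
  constructor
  · rw [show ((C.1 0 0 : ℤ) : ZMod n) * ((g : ℤ) : ZMod n) = ((C.1 0 0 * g : ℤ) : ZMod n) by
      push_cast; ring, (ZMod.intCast_eq_intCast_iff _ _ _).mpr hC1, hgcd]
    push_cast; ring
  · rw [show ((C.1 1 0 : ℤ) : ZMod n) * ((g : ℤ) : ZMod n) = ((C.1 1 0 * g : ℤ) : ZMod n) by
      push_cast; ring, (ZMod.intCast_eq_intCast_iff _ _ _).mpr hC2]
    push_cast; rfl

/-- `SL₂(ℤ)` acts transitively on the elements of `Z_n²` of a given additive
order. -/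
theorem statement9 (n : ℕ) (hn : 1 ≤ n) (x y : ZMod n × ZMod n)
    (h : addOrderOf x = addOrderOf y) :
    ∃ A : Matrix.SpecialLinearGroup (Fin 2) ℤ, sl2Hom n A x = y := by
  haveI : NeZero n := ⟨by omega⟩
  obtain ⟨A₁, hA₁⟩ := reduce n x
  obtain ⟨A₂, hA₂⟩ := reduce n y
  set dx := Nat.gcd (Nat.gcd x.1.val x.2.val) n with hdx
  set dy := Nat.gcd (Nat.gcd y.1.val y.2.val) n with hdy
  have hdxy : dx = dy := by
    have hx := order_eq n x
    have hy := order_eq n y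
    rw [← hdx] at hx
    rw [← hdy] at hy
    have h1 : n / dx = n / dy := by rw [← hx, ← hy, h]
    have h2 : dx ∣ n := Nat.gcd_dvd_right _ _
    have h3 : dy ∣ n := Nat.gcd_dvd_right _ _
    rw [← Nat.div_div_self h2 (NeZero.ne n), ← Nat.div_div_self h3 (NeZero.ne n), h1]
  refine ⟨A₂⁻¹ * A₁, ?_⟩
  rw [sl2Hom_mul, hA₁, hdxy, ← hA₂, ← sl2Hom_mul, inv_mul_cancel, sl2Hom_one]
end

section
/- SL₂(ℤ) acts transitively on the additive subgroups of Z_n² of a given cotype: for every n ≥ 1 and all additive subgroups K₁, K₂ ≤ Z_n² that are isomorphic as abstract additive groups (equivalently, of the same cotype), there exists A ∈ SL₂(ℤ) such that the image of K₁ under the action of A equals K₂. -/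
namespace Stmt10

open AddSubgroup Matrix

variable {n : ℕ}

lemma sl2Hom_apply (n : ℕ) (A : Matrix.SpecialLinearGroup (Fin 2) ℤ) (x : ZMod n × ZMod n) :
    sl2Hom n A x = (((A.1 0 0 : ℤ) : ZMod n) * x.1 + ((A.1 0 1 : ℤ) : ZMod n) * x.2,
              ((A.1 1 0 : ℤ) : ZMod n) * x.1 + ((A.1 1 1 : ℤ) : ZMod n) * x.2) := rfl

lemma sl2Hom_mul (n : ℕ) (A B : Matrix.SpecialLinearGroup (Fin 2) ℤ) :
    sl2Hom n (A * B) = (sl2Hom n A).comp (sl2Hom n B) := by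
  refine DFunLike.ext _ _ fun x => ?_
  simp only [sl2Hom_apply, AddMonoidHom.comp_apply, Matrix.SpecialLinearGroup.coe_mul,
    Matrix.mul_apply, Fin.sum_univ_two]
  refine Prod.ext ?_ ?_ <;> · push_cast; ring

lemma sl2Hom_one (n : ℕ) : sl2Hom n 1 = AddMonoidHom.id _ := by
  refine DFunLike.ext _ _ fun x => ?_
  simp [sl2Hom_apply, Matrix.SpecialLinearGroup.coe_one, Matrix.one_apply]

lemma map_sl2Hom_inv (n : ℕ) (A : Matrix.SpecialLinearGroup (Fin 2) ℤ)
    (K : AddSubgroup (ZMod n × ZMod n)) :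
    (K.map (sl2Hom n A)).map (sl2Hom n A⁻¹) = K := by
  rw [AddSubgroup.map_map, ← sl2Hom_mul, inv_mul_cancel, sl2Hom_one]
  exact K.map_id

lemma sl2Hom_injective (n : ℕ) (A : Matrix.SpecialLinearGroup (Fin 2) ℤ) :
    Function.Injective (sl2Hom n A) := by
  have h : (sl2Hom n A⁻¹).comp (sl2Hom n A) = AddMonoidHom.id _ := by
    rw [← sl2Hom_mul, inv_mul_cancel, sl2Hom_one]
  intro x y hxy
  have := congrArg (sl2Hom n A⁻¹) hxy
  rwa [← AddMonoidHom.comp_apply, ← AddMonoidHom.comp_apply, h] at this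

/-- standard subgroup with "elementary divisor" parameters -/
def S (n : ℕ) (a b : ℤ) : AddSubgroup (ZMod n × ZMod n) :=
  AddSubgroup.closure {((a : ZMod n), 0), (0, (b : ZMod n))}

lemma S_eq_prod (a b : ℤ) :
    S n a b = (zmultiples ((a : ZMod n))).prod (zmultiples ((b : ZMod n))) := by
  apply le_antisymm
  · rw [S, closure_le]
    rintro x (rfl | rfl)
    · exact ⟨mem_zmultiples _, zero_mem _⟩
    · exact ⟨zero_mem _, mem_zmultiples _⟩
  · rintro ⟨x, y⟩ hxy
    rw [AddSubgroup.mem_prod] at hxy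
    obtain ⟨hx, hy⟩ := hxy
    rw [mem_zmultiples_iff] at hx hy
    obtain ⟨j, rfl⟩ := hx
    obtain ⟨k, rfl⟩ := hy
    have : ((j • (a : ZMod n) : ZMod n), (k • (b : ZMod n) : ZMod n))
        = j • (((a : ZMod n)), (0 : ZMod n)) + k • ((0 : ZMod n), ((b : ZMod n))) := by
      simp
    rw [this]
    exact add_mem (zsmul_mem (subset_closure (by simp)) j)
      (zsmul_mem (subset_closure (by simp)) k)

lemma zmultiples_intCast_gcd (a : ℤ) :
    zmultiples ((a : ZMod n)) = zmultiples (((Int.gcd a n : ℤ) : ZMod n)) := by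
  apply le_antisymm <;> rw [zmultiples_le, mem_zmultiples_iff]
  · refine ⟨a / Int.gcd a n, ?_⟩
    rw [zsmul_eq_mul, ← Int.cast_mul, Int.ediv_mul_cancel (Int.gcd_dvd_left a n)]
  · refine ⟨Int.gcdA a n, ?_⟩
    rw [zsmul_eq_mul, ← Int.cast_mul]
    have h := Int.gcd_eq_gcd_ab a n
    have : ((Int.gcd a n : ℤ) : ZMod n) = ((Int.gcdA a n * a + (n : ℤ) * Int.gcdB a n : ℤ) : ZMod n) := by
      rw [h]; ring_nf
    rw [this]
    push_cast
    simp [ZMod.natCast_self]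


/-- reduction mod n on ℤ² -/
def pi (n : ℕ) : (ℤ × ℤ) →+ (ZMod n × ZMod n) :=
  AddMonoidHom.prodMap (Int.castAddHom (ZMod n)) (Int.castAddHom (ZMod n))

lemma pi_apply (n : ℕ) (x : ℤ × ℤ) : pi n x = (((x.1 : ℤ) : ZMod n), ((x.2 : ℤ) : ZMod n)) := rfl

lemma pi_surjective (n : ℕ) : Function.Surjective (pi n) := by
  rintro ⟨x, y⟩
  obtain ⟨x', rfl⟩ := ZMod.intCast_surjective x
  obtain ⟨y', rfl⟩ := ZMod.intCast_surjective y
  exact ⟨(x', y'), rfl⟩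

/-- integral action of the matrix on ℤ² -/
def intAct (A : Matrix.SpecialLinearGroup (Fin 2) ℤ) : (ℤ × ℤ) →+ (ℤ × ℤ) where
  toFun x := (A.1 0 0 * x.1 + A.1 0 1 * x.2, A.1 1 0 * x.1 + A.1 1 1 * x.2)
  map_zero' := by simp
  map_add' x y := by
    simp only [Prod.fst_add, Prod.snd_add, Prod.mk_add_mk, Prod.mk.injEq]
    constructor <;> ring

lemma sl2Hom_pi (n : ℕ) (A : Matrix.SpecialLinearGroup (Fin 2) ℤ) (x : ℤ × ℤ) :
    sl2Hom n A (pi n x) = pi n (intAct A x) := by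
  simp only [sl2Hom_apply, pi_apply, intAct, AddMonoidHom.coe_mk, ZeroHom.coe_mk]
  refine Prod.ext ?_ ?_ <;> · push_cast; ring

lemma range_fin_two {β : Type*} (f : Fin 2 → β) : Set.range f = {f 0, f 1} := by
  ext y
  constructor
  · rintro ⟨i, rfl⟩
    fin_cases i <;> simp
  · rintro (rfl | rfl)
    exacts [⟨0, rfl⟩, ⟨1, rfl⟩]

lemma exists_std (hn : n ≠ 0) (K : AddSubgroup (ZMod n × ZMod n)) :
    ∃ (A : Matrix.SpecialLinearGroup (Fin 2) ℤ) (a b : ℤ),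
      (S n a b).map (sl2Hom n A) = K := by
  classical
  set L : Submodule ℤ (ℤ × ℤ) := AddSubgroup.toIntSubmodule (K.comap (pi n)) with hLdef
  have hmemn : ∀ x : ℤ × ℤ, ((n : ℤ) • x) ∈ L := by
    intro x
    show (n : ℤ) • x ∈ K.comap (pi n)
    rw [AddSubgroup.mem_comap, map_zsmul]
    have : (n : ℤ) • (pi n x) = 0 := by
      refine Prod.ext ?_ ?_ <;>
      · show (n : ℤ) • _ = (0 : ZMod n)
        rw [zsmul_eq_mul]
        push_cast
        simp [ZMod.natCast_self]
    rw [this]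
    exact zero_mem K
  obtain ⟨m, snf⟩ := L.smithNormalForm (Module.Basis.finTwoProd ℤ)
  have hLspan : L = Submodule.span ℤ (Set.range (fun i => (snf.bN i : ℤ × ℤ))) := by
    conv_lhs => rw [← Submodule.map_subtype_top L, ← snf.bN.span_eq, Submodule.map_span]
    rw [← Set.range_comp]
    rfl
  have hm : m ≤ 2 := by
    have := Fintype.card_le_of_embedding snf.f
    simpa using this
  interval_cases m
  · exfalso
    rw [Set.range_eq_empty, Submodule.span_empty] at hLspan
    have h1 := hmemn (1, 0)
    rw [hLspan, Submodule.mem_bot] at h1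
    have : ((n : ℤ), (0 : ℤ)) = 0 := by simpa using h1
    have : (n : ℤ) = 0 := congrArg Prod.fst this
    exact hn (by exact_mod_cast this)
  · exfalso
    set v : ℤ × ℤ := (snf.bN 0 : ℤ × ℤ) with hv
    have hrange : Set.range (fun i : Fin 1 => (snf.bN i : ℤ × ℤ)) = {v} := by
      rw [Set.range_unique]; rfl
    rw [hrange] at hLspan
    have h1 := hmemn (1, 0)
    have h2 := hmemn (0, 1)
    rw [hLspan, Submodule.mem_span_singleton] at h1 h2
    obtain ⟨c, hc⟩ := h1
    obtain ⟨d, hd⟩ := h2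
    have hc1 : c * v.1 = (n : ℤ) := by simpa [Prod.smul_def, smul_eq_mul] using congrArg Prod.fst hc
    have hc2 : c * v.2 = 0 := by simpa [Prod.smul_def, smul_eq_mul] using congrArg Prod.snd hc
    have hd1 : d * v.1 = 0 := by simpa [Prod.smul_def, smul_eq_mul] using congrArg Prod.fst hd
    have hd2 : d * v.2 = (n : ℤ) := by simpa [Prod.smul_def, smul_eq_mul] using congrArg Prod.snd hd
    have key : (n : ℤ) * (n : ℤ) = 0 := by nlinarith [hc1, hc2, hd1, hd2]
    have : (n : ℤ) = 0 := by
      rcases mul_eq_zero.mp key with h | h <;> exact h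
    exact hn (by exact_mod_cast this)
  · -- m = 2
    have hfbij : Function.Bijective snf.f := Finite.injective_iff_bijective.mp snf.f.injective
    let e : Fin 2 ≃ Fin 2 := Equiv.ofBijective _ hfbij
    let b2 : Module.Basis (Fin 2) ℤ (ℤ × ℤ) := snf.bM.reindex e.symm
    have hb2 : ∀ i, b2 i = snf.bM (snf.f i) := by
      intro i
      simp only [b2, Module.Basis.reindex_apply, Equiv.symm_symm]
      rfl
    have hx : ∀ i, (snf.bN i : ℤ × ℤ) = snf.a i • b2 i := by
      intro i
      rw [hb2 i]
      exact snf.snf i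
    have hud : IsUnit ((Module.Basis.finTwoProd ℤ).det b2) := Module.Basis.isUnit_det _ _
    have hdet2 : (Module.Basis.finTwoProd ℤ).det b2 = (b2 0).1 * (b2 1).2 - (b2 1).1 * (b2 0).2 := by
      rw [Module.Basis.det_apply, Matrix.det_fin_two]
      simp [Module.Basis.toMatrix_apply, Module.Basis.coe_finTwoProd_repr]
    obtain ⟨ε, hε, hdet⟩ : ∃ ε : ℤ, ε * ε = 1 ∧
        (b2 0).1 * (ε * (b2 1).2) - ε * (b2 1).1 * (b2 0).2 = 1 := by
      rcases Int.isUnit_iff.mp hud with hs | hs <;> rw [hdet2] at hs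
      · exact ⟨1, by norm_num, by linarith⟩
      · exact ⟨-1, by norm_num, by linarith⟩
    set M0 : Matrix (Fin 2) (Fin 2) ℤ :=
      !![(b2 0).1, ε * (b2 1).1; (b2 0).2, ε * (b2 1).2] with hM0
    have hA00 : M0 0 0 = (b2 0).1 := by rw [hM0]; simp
    have hA10 : M0 1 0 = (b2 0).2 := by rw [hM0]; simp
    have hA01 : M0 0 1 = ε * (b2 1).1 := by rw [hM0]; simp
    have hA11 : M0 1 1 = ε * (b2 1).2 := by rw [hM0]; simp
    have hdM : M0.det = 1 := by
      rw [hM0, Matrix.det_fin_two_of]; linarith [hdet]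
    set A : Matrix.SpecialLinearGroup (Fin 2) ℤ := ⟨M0, hdM⟩ with hA
    refine ⟨A, snf.a 0, ε * snf.a 1, ?_⟩
    have hrange : Set.range (fun i : Fin 2 => (snf.bN i : ℤ × ℤ))
        = {(snf.bN 0 : ℤ × ℤ), (snf.bN 1 : ℤ × ℤ)} := range_fin_two _
    have hcomap : K.comap (pi n) =
        AddSubgroup.closure {(snf.bN 0 : ℤ × ℤ), (snf.bN 1 : ℤ × ℤ)} := by
      have h2 := congrArg Submodule.toAddSubgroup hLspan
      rw [AddSubgroup.toIntSubmodule_toAddSubgroup, hrange,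
        Submodule.span_int_eq_addSubgroupClosure] at h2
      exact h2
    have hK : K = (K.comap (pi n)).map (pi n) :=
      (AddSubgroup.map_comap_eq_self_of_surjective (pi_surjective n) K).symm
    rw [hK, hcomap, AddMonoidHom.map_closure, Set.image_insert_eq, Set.image_singleton,
      S, AddMonoidHom.map_closure, Set.image_insert_eq, Set.image_singleton]
    have hAe : A.1 = M0 := rfl
    have him0 : sl2Hom n A (((snf.a 0 : ℤ) : ZMod n), 0) = pi n (snf.bN 0 : ℤ × ℤ) := by
      have h0 : (((snf.a 0 : ℤ) : ZMod n), (0 : ZMod n)) = pi n ((snf.a 0 : ℤ), (0 : ℤ)) := by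
        simp [pi_apply]
      rw [h0, sl2Hom_pi, hx 0]
      congr 1
      simp only [intAct, AddMonoidHom.coe_mk, ZeroHom.coe_mk, hAe, hA00, hA10]
      refine Prod.ext ?_ ?_ <;>
      · simp only [Prod.smul_def, smul_eq_mul, Prod.fst, Prod.snd]
        ring
    have him1 : sl2Hom n A (0, ((ε * snf.a 1 : ℤ) : ZMod n)) = pi n (snf.bN 1 : ℤ × ℤ) := by
      have h0 : ((0 : ZMod n), ((ε * snf.a 1 : ℤ) : ZMod n)) = pi n ((0 : ℤ), (ε * snf.a 1 : ℤ)) := by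
        simp [pi_apply]
      rw [h0, sl2Hom_pi, hx 1]
      congr 1
      simp only [intAct, AddMonoidHom.coe_mk, ZeroHom.coe_mk, hAe, hA01, hA11]
      refine Prod.ext ?_ ?_ <;>
      · simp only [Prod.smul_def, smul_eq_mul, Prod.fst, Prod.snd]
        first
        | linear_combination ((b2 1).1 * snf.a 1) * hε
        | linear_combination (-((b2 1).1 * snf.a 1)) * hε
        | linear_combination ((b2 1).2 * snf.a 1) * hε
        | linear_combination (-((b2 1).2 * snf.a 1)) * hε
        | nlinarith [hε]
    rw [him0, him1]

lemma exists_normalize (a b : ℤ) (ha : 0 < a) (hb : 0 < b) :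
    ∃ A : Matrix.SpecialLinearGroup (Fin 2) ℤ,
      (S n a b).map (sl2Hom n A) = S n (Int.gcd a b) (Int.lcm a b) := by
  set g : ℤ := (Int.gcd a b : ℤ) with hgdef
  have hg0 : 0 < g := by
    have h0 : 0 < Int.gcd a b := Int.gcd_pos_iff.mpr (Or.inl ha.ne')
    rw [hgdef]
    exact_mod_cast h0
  obtain ⟨a1, ha1⟩ : g ∣ a := Int.gcd_dvd_left a b
  obtain ⟨b1, hb1⟩ : g ∣ b := Int.gcd_dvd_right a b
  set u := Int.gcdA a b with hu
  set v := Int.gcdB a b with hv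
  have hbez : g = a * u + b * v := Int.gcd_eq_gcd_ab a b
  set l : ℤ := (Int.lcm a b : ℤ) with hldef
  have hgl : g * l = a * b := by
    have h1 := Int.gcd_mul_lcm a b
    have h2 : ((Int.gcd a b * Int.lcm a b : ℕ) : ℤ) = ((a * b).natAbs : ℤ) := by
      exact_mod_cast congrArg (Nat.cast : ℕ → ℤ) (h1.trans (Int.natAbs_mul a b).symm)
    rw [Int.natAbs_of_nonneg (by positivity)] at h2
    push_cast at h2
    exact h2
  have hlab : l = g * (a1 * b1) := by
    apply mul_left_cancel₀ hg0.ne'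
    rw [hgl]
    linear_combination b * ha1 + g * a1 * hb1
  have hdet1 : u * a1 + v * b1 = 1 := by
    apply mul_left_cancel₀ hg0.ne'
    have h5 : g * (u * a1 + v * b1) = a * u + b * v := by
      linear_combination (-u) * ha1 + (-v) * hb1
    rw [h5, ← hbez, mul_one]
  set M1 : Matrix (Fin 2) (Fin 2) ℤ := !![u, v; -b1, a1] with hM1
  have hE00 : M1 0 0 = u := by rw [hM1]; simp
  have hE01 : M1 0 1 = v := by rw [hM1]; simp
  have hE10 : M1 1 0 = -b1 := by rw [hM1]; simp
  have hE11 : M1 1 1 = a1 := by rw [hM1]; simp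
  have hdM : M1.det = 1 := by
    rw [hM1, Matrix.det_fin_two_of]; linarith [hdet1]
  set A : Matrix.SpecialLinearGroup (Fin 2) ℤ := ⟨M1, hdM⟩ with hA
  have hAe : A.1 = M1 := rfl
  refine ⟨A, ?_⟩
  have hba : b1 * a = l := by rw [ha1, hlab]; ring
  have hab : a1 * b = l := by rw [hb1, hlab]; ring
  -- compute the images of the generators
  have him0 : sl2Hom n A (((a : ℤ) : ZMod n), 0) = pi n (u * a, -l) := by
    have h0 : (((a : ℤ) : ZMod n), (0 : ZMod n)) = pi n (a, 0) := by simp [pi_apply]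
    rw [h0, sl2Hom_pi]
    congr 1
    simp only [intAct, AddMonoidHom.coe_mk, ZeroHom.coe_mk, hAe, hE00, hE10]
    refine Prod.ext ?_ ?_ <;> simp only [Prod.fst, Prod.snd]
    · ring
    · rw [← hba]; ring
  have him1 : sl2Hom n A (0, ((b : ℤ) : ZMod n)) = pi n (v * b, l) := by
    have h0 : ((0 : ZMod n), ((b : ℤ) : ZMod n)) = pi n (0, b) := by simp [pi_apply]
    rw [h0, sl2Hom_pi]
    congr 1
    simp only [intAct, AddMonoidHom.coe_mk, ZeroHom.coe_mk, hAe, hE01, hE11]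
    refine Prod.ext ?_ ?_ <;> simp only [Prod.fst, Prod.snd]
    · ring
    · rw [← hab]; ring
  rw [S, AddMonoidHom.map_closure, Set.image_insert_eq, Set.image_singleton, him0, him1]
  have hgen0 : pi n ((g : ℤ), (0 : ℤ)) = (((Int.gcd a b : ℤ) : ZMod n), (0 : ZMod n)) := by
    simp [pi_apply, hgdef]
  have hgen1 : pi n ((0 : ℤ), (l : ℤ)) = ((0 : ZMod n), ((Int.lcm a b : ℤ) : ZMod n)) := by
    simp [pi_apply, hldef]
  -- now prove equality of the two closures
  apply le_antisymm
  · rw [closure_le]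
    rintro x (rfl | rfl)
    · -- pi n (u*a, -l) ∈ S n gcd lcm
      have hz : (u * a, -l) = (u * a1) • ((g : ℤ), (0 : ℤ)) + (-1 : ℤ) • ((0 : ℤ), l) := by
        refine Prod.ext ?_ ?_ <;> simp only [Prod.smul_def, Prod.fst_add, Prod.snd_add,
          smul_eq_mul, Prod.fst, Prod.snd]
        · rw [ha1]; ring
        · ring
      rw [hz, map_add, map_zsmul, map_zsmul, hgen0, hgen1]
      exact add_mem (zsmul_mem (subset_closure (by simp [hgdef, hldef])) _)
        (zsmul_mem (subset_closure (by simp [hgdef, hldef])) _)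
    · have hz : (v * b, l) = (v * b1) • ((g : ℤ), (0 : ℤ)) + (1 : ℤ) • ((0 : ℤ), l) := by
        refine Prod.ext ?_ ?_ <;> simp only [Prod.smul_def, Prod.fst_add, Prod.snd_add,
          smul_eq_mul, Prod.fst, Prod.snd]
        · rw [hb1]; ring
        · ring
      rw [hz, map_add, map_zsmul, map_zsmul, hgen0, hgen1]
      exact add_mem (zsmul_mem (subset_closure (by simp [hgdef, hldef])) _)
        (zsmul_mem (subset_closure (by simp [hgdef, hldef])) _)
  · rw [S, closure_le]
    have hxy : pi n ((g : ℤ), (0 : ℤ)) ∈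
        AddSubgroup.closure {pi n (u * a, -l), pi n (v * b, l)} := by
      have hz : ((g : ℤ), (0 : ℤ)) = (u * a, -l) + (v * b, l) := by
        refine Prod.ext ?_ ?_ <;> simp only [Prod.fst_add, Prod.snd_add, Prod.fst, Prod.snd]
        · rw [hbez]; ring
        · ring
      rw [hz, map_add]
      exact add_mem (subset_closure (by simp [hgdef, hldef])) (subset_closure (by simp [hgdef, hldef]))
    rintro x (rfl | rfl)
    · rw [← hgen0]
      exact hxy
    · -- (0, l)
      have hz : pi n ((0 : ℤ), (l : ℤ)) = pi n (v * b, l) + (-(v * b1)) • pi n ((g : ℤ), (0 : ℤ)) := by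
        rw [← map_zsmul, ← map_add]
        congr 1
        refine Prod.ext ?_ ?_ <;> simp only [Prod.smul_def, Prod.fst_add, Prod.snd_add,
          smul_eq_mul, Prod.fst, Prod.snd]
        · rw [hb1]; ring
        · ring
      rw [← hgen1, hz]
      exact add_mem (subset_closure (by simp [hgdef, hldef])) (zsmul_mem hxy _)

lemma isAddCyclic_zmultiples {G : Type*} [AddCommGroup G] (x : G) :
    IsAddCyclic (zmultiples x) := by
  refine ⟨⟨x, mem_zmultiples x⟩, fun y => ?_⟩
  obtain ⟨k, hk⟩ := mem_zmultiples_iff.mp y.2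
  exact mem_zmultiples_iff.mpr ⟨k, Subtype.ext (by rw [AddSubgroup.coe_zsmul]; exact hk)⟩

lemma card_zm (hn : n ≠ 0) (u : ℕ) (hu : u ∣ n) :
    Nat.card (zmultiples (((u : ℤ) : ZMod n))) = n / u := by
  have h1 : (((u : ℤ)) : ZMod n) = ((u : ℕ) : ZMod n) := by push_cast; rfl
  rw [h1, Nat.card_zmultiples, ZMod.addOrderOf_coe u hn, Nat.gcd_eq_right hu]

lemma card_S (hn : n ≠ 0) (u v : ℕ) (hu : u ∣ n) (hv : v ∣ n) :
    Nat.card (S n (u : ℤ) (v : ℤ)) = (n / u) * (n / v) := by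
  rw [S_eq_prod, Nat.card_congr (AddSubgroup.prodEquiv _ _).toEquiv, Nat.card_prod,
    card_zm hn u hu, card_zm hn v hv]

lemma exponent_S (hn : n ≠ 0) (u v : ℕ) (hu : u ∣ n) (hv : v ∣ n) :
    AddMonoid.exponent (S n (u : ℤ) (v : ℤ)) = Nat.lcm (n / u) (n / v) := by
  rw [S_eq_prod]
  have e := AddSubgroup.prodEquiv (zmultiples (((u : ℤ) : ZMod n)))
    (zmultiples (((v : ℤ) : ZMod n)))
  rw [AddMonoid.exponent_eq_of_addEquiv e, AddMonoid.exponent_prod]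
  haveI := isAddCyclic_zmultiples (((u : ℤ) : ZMod n))
  haveI := isAddCyclic_zmultiples (((v : ℤ) : ZMod n))
  rw [IsAddCyclic.exponent_eq_card, IsAddCyclic.exponent_eq_card, card_zm hn u hu, card_zm hn v hv,
    lcm_eq_nat_lcm]

lemma S_params_eq (hn : n ≠ 0) {u₁ v₁ u₂ v₂ : ℕ} (hu₁ : 0 < u₁) (h1 : u₁ ∣ v₁) (h2 : v₁ ∣ n)
    (hu₂ : 0 < u₂) (h3 : u₂ ∣ v₂) (h4 : v₂ ∣ n)
    (hiso : Nonempty ((S n (u₁ : ℤ) (v₁ : ℤ)) ≃+ S n (u₂ : ℤ) (v₂ : ℤ))) :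
    u₁ = u₂ ∧ v₁ = v₂ := by
  obtain ⟨e⟩ := hiso
  have hnpos : 0 < n := Nat.pos_of_ne_zero hn
  have hun₁ : u₁ ∣ n := h1.trans h2
  have hun₂ : u₂ ∣ n := h3.trans h4
  have hv₁ : 0 < v₁ := Nat.pos_of_dvd_of_pos h2 hnpos
  have hv₂ : 0 < v₂ := Nat.pos_of_dvd_of_pos h4 hnpos
  -- lcm computation
  have hlcm : ∀ u v : ℕ, 0 < u → u ∣ v → v ∣ n → Nat.lcm (n / u) (n / v) = n / u := by
    intro u v hu huv hvn
    have hv : 0 < v := Nat.pos_of_dvd_of_pos hvn (Nat.pos_of_ne_zero hn)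
    obtain ⟨c, hc⟩ := huv
    obtain ⟨d, hd⟩ := hvn
    have hnu : n / u = c * d := by
      rw [hd, hc]
      rw [Nat.mul_assoc, Nat.mul_div_cancel_left _ hu]
    have hnv : n / v = d := by
      rw [hd, Nat.mul_div_cancel_left _ hv]
    rw [hnu, hnv]
    exact Nat.dvd_antisymm (Nat.lcm_dvd dvd_rfl (dvd_mul_left d c)) (Nat.dvd_lcm_left _ _)
  have hcard : (n / u₁) * (n / v₁) = (n / u₂) * (n / v₂) := by
    rw [← card_S hn u₁ v₁ hun₁ h2, ← card_S hn u₂ v₂ hun₂ h4]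
    exact Nat.card_congr e.toEquiv
  have hexp : n / u₁ = n / u₂ := by
    rw [← hlcm u₁ v₁ hu₁ h1 h2, ← hlcm u₂ v₂ hu₂ h3 h4,
      ← exponent_S hn u₁ v₁ hun₁ h2, ← exponent_S hn u₂ v₂ hun₂ h4]
    exact AddMonoid.exponent_eq_of_addEquiv e
  have hueq : u₁ = u₂ := by
    rw [← Nat.div_div_self hun₁ hn, hexp, Nat.div_div_self hun₂ hn]
  refine ⟨hueq, ?_⟩
  have hpos : 0 < n / u₁ := Nat.div_pos (Nat.le_of_dvd hnpos hun₁) hu₁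
  have hveq : n / v₁ = n / v₂ := by
    rw [hexp] at hcard
    exact Nat.eq_of_mul_eq_mul_left (hexp ▸ hpos) hcard
  rw [← Nat.div_div_self h2 hn, hveq, Nat.div_div_self h4 hn]

lemma exists_nice (hn : n ≠ 0) (K : AddSubgroup (ZMod n × ZMod n)) :
    ∃ (C : Matrix.SpecialLinearGroup (Fin 2) ℤ) (g l : ℕ), 0 < g ∧ g ∣ l ∧ l ∣ n ∧
      (S n (g : ℤ) (l : ℤ)).map (sl2Hom n C) = K := by
  obtain ⟨A, a, b, hA⟩ := exists_std hn K
  set a' : ℕ := Int.gcd a n with ha'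
  set b' : ℕ := Int.gcd b n with hb'
  have hnz : (n : ℤ) ≠ 0 := by exact_mod_cast hn
  have ha'0 : 0 < a' := Int.gcd_pos_iff.mpr (Or.inr hnz)
  have hb'0 : 0 < b' := Int.gcd_pos_iff.mpr (Or.inr hnz)
  have ha'n : a' ∣ n := by
    have : ((a' : ℤ)) ∣ (n : ℤ) := Int.gcd_dvd_right a n
    exact_mod_cast this
  have hb'n : b' ∣ n := by
    have : ((b' : ℤ)) ∣ (n : ℤ) := Int.gcd_dvd_right b n
    exact_mod_cast this
  have hSab : S n a b = S n (a' : ℤ) (b' : ℤ) := by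
    rw [S_eq_prod, S_eq_prod, zmultiples_intCast_gcd a, zmultiples_intCast_gcd b]
  obtain ⟨B, hB⟩ := exists_normalize (a' : ℤ) (b' : ℤ) (by exact_mod_cast ha'0)
    (by exact_mod_cast hb'0)
  set g : ℕ := Int.gcd (a' : ℤ) (b' : ℤ) with hg
  set l : ℕ := Int.lcm (a' : ℤ) (b' : ℤ) with hl
  have hgnat : g = Nat.gcd a' b' := by rw [hg]; exact Int.gcd_natCast_natCast a' b'
  have hlnat : l = Nat.lcm a' b' := by rw [hl]; exact Int.lcm_natCast_natCast a' b'
  refine ⟨A * B⁻¹, g, l, ?_, ?_, ?_, ?_⟩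
  · rw [hgnat]
    exact Nat.gcd_pos_of_pos_left _ ha'0
  · rw [hgnat, hlnat]
    exact (Nat.gcd_dvd_left a' b').trans (Nat.dvd_lcm_left a' b')
  · rw [hlnat]
    exact Nat.lcm_dvd ha'n hb'n
  · have hSback : (S n (g : ℤ) (l : ℤ)).map (sl2Hom n B⁻¹) = S n (a' : ℤ) (b' : ℤ) := by
      rw [← hB]
      exact map_sl2Hom_inv n B _
    rw [sl2Hom_mul, ← AddSubgroup.map_map, hSback, ← hSab, hA]

end Stmt10

/-- `SL₂(ℤ)` acts transitively on the additive subgroups of `Z_n²` of a given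
cotype: if two additive subgroups of `Z_n²` are isomorphic as abstract additive
groups then some `A ∈ SL₂(ℤ)` maps one onto the other. -/
theorem statement10 (n : ℕ) (hn : 1 ≤ n)
    (K₁ K₂ : AddSubgroup (ZMod n × ZMod n)) (h : Nonempty (K₁ ≃+ K₂)) :
    ∃ A : Matrix.SpecialLinearGroup (Fin 2) ℤ, K₁.map (sl2Hom n A) = K₂ := by
  have hn0 : n ≠ 0 := by omega
  obtain ⟨C₁, g₁, l₁, hg₁, hgl₁, hln₁, hC₁⟩ := Stmt10.exists_nice hn0 K₁
  obtain ⟨C₂, g₂, l₂, hg₂, hgl₂, hln₂, hC₂⟩ := Stmt10.exists_nice hn0 K₂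
  have hiso : Nonempty ((Stmt10.S n (g₁ : ℤ) (l₁ : ℤ)) ≃+ Stmt10.S n (g₂ : ℤ) (l₂ : ℤ)) := by
    obtain ⟨e⟩ := h
    have e₁ : (Stmt10.S n (g₁ : ℤ) (l₁ : ℤ)) ≃+ K₁ :=
      ((Stmt10.S n (g₁ : ℤ) (l₁ : ℤ)).equivMapOfInjective _
        (Stmt10.sl2Hom_injective n C₁)).trans (AddEquiv.addSubgroupCongr hC₁)
    have e₂ : (Stmt10.S n (g₂ : ℤ) (l₂ : ℤ)) ≃+ K₂ :=
      ((Stmt10.S n (g₂ : ℤ) (l₂ : ℤ)).equivMapOfInjective _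
        (Stmt10.sl2Hom_injective n C₂)).trans (AddEquiv.addSubgroupCongr hC₂)
    exact ⟨(e₁.trans e).trans e₂.symm⟩
  obtain ⟨hgeq, hleq⟩ := Stmt10.S_params_eq hn0 hg₁ hgl₁ hln₁ hg₂ hgl₂ hln₂ hiso
  subst hgeq
  subst hleq
  refine ⟨C₂ * C₁⁻¹, ?_⟩
  rw [← hC₁, ← hC₂, AddSubgroup.map_map, ← Stmt10.sl2Hom_mul, mul_assoc, inv_mul_cancel, mul_one]
end

section
/- Let p be a prime, n ≥ 2, and π : (ZMod p^n)² → (ZMod p^{n-1})² the coordinatewise reduction homomorphism. If K ≤ (ZMod p^n)² is a cyclic additive subgroup of order p^n, then π(K) is a cyclic subgroup of (ZMod p^{n-1})² of order p^{n-1}. Moreover, for every cyclic additive subgroup K' ≤ (ZMod p^{n-1})² of order p^{n-1}, the number of cyclic additive subgroups K ≤ (ZMod p^n)² of order p^n with π(K) = K' equals exactly p. -/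
open AddSubgroup



lemma zmod_addOrderOf_unit {N : ℕ} [NeZero N] {a : ZMod N} (h : IsUnit a) :
    addOrderOf a = N := by
  have hv : ((a.val : ℕ) : ZMod N) = a := ZMod.natCast_rightInverse a
  rw [← hv] at h ⊢
  rw [ZMod.addOrderOf_coe a.val (NeZero.ne N)]
  rw [ZMod.isUnit_iff_coprime] at h
  rw [Nat.gcd_comm, h]
  simp

lemma zmod_unit_of_addOrderOf {N : ℕ} [NeZero N] {a : ZMod N} (h : addOrderOf a = N) :
    IsUnit a := by
  have hv : ((a.val : ℕ) : ZMod N) = a := ZMod.natCast_rightInverse a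
  rw [← hv] at h ⊢
  rw [ZMod.addOrderOf_coe a.val (NeZero.ne N)] at h
  rw [ZMod.isUnit_iff_coprime, Nat.Coprime, Nat.gcd_comm]
  rcases (Nat.div_eq_self).mp h with h0 | h1
  · exact absurd h0 (NeZero.ne N)
  · exact h1

lemma pair_addOrderOf {N : ℕ} [NeZero N] {a b : ZMod N} (h : IsUnit a ∨ IsUnit b) :
    addOrderOf ((a, b) : ZMod N × ZMod N) = N := by
  rw [Prod.addOrderOf]
  have ha : addOrderOf a ∣ N := by
    simpa [Nat.card_zmod] using addOrderOf_dvd_natCard a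
  have hb : addOrderOf b ∣ N := by
    simpa [Nat.card_zmod] using addOrderOf_dvd_natCard b
  refine Nat.dvd_antisymm (Nat.lcm_dvd ha hb) ?_
  rcases h with h | h
  · rw [zmod_addOrderOf_unit h] at *; exact Nat.dvd_lcm_left _ _
  · rw [zmod_addOrderOf_unit h] at *; exact Nat.dvd_lcm_right _ _

lemma pair_unit_of_addOrderOf {p : ℕ} (hp : p.Prime) {k : ℕ} [NeZero (p ^ k)]
    {a b : ZMod (p ^ k)} (h : addOrderOf ((a, b) : ZMod (p ^ k) × ZMod (p ^ k)) = p ^ k) :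
    IsUnit a ∨ IsUnit b := by
  rw [Prod.addOrderOf] at h
  have ha : addOrderOf a ∣ p ^ k := by
    simpa [Nat.card_zmod] using addOrderOf_dvd_natCard a
  have hb : addOrderOf b ∣ p ^ k := by
    simpa [Nat.card_zmod] using addOrderOf_dvd_natCard b
  obtain ⟨i, hi, hia⟩ := (Nat.dvd_prime_pow hp).mp ha
  obtain ⟨j, hj, hjb⟩ := (Nat.dvd_prime_pow hp).mp hb
  have hdvd : p ^ k ∣ p ^ (max i j) := by
    rw [← h, hia, hjb]
    exact Nat.lcm_dvd (pow_dvd_pow p (le_max_left _ _)) (pow_dvd_pow p (le_max_right _ _))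
  have hk : k ≤ max i j := (Nat.pow_dvd_pow_iff_le_right hp.one_lt).mp hdvd
  rcases le_max_iff.mp hk with hki | hkj
  · left; exact zmod_unit_of_addOrderOf (by rw [hia, le_antisymm hi hki])
  · right; exact zmod_unit_of_addOrderOf (by rw [hjb, le_antisymm hj hkj])

-- unit scalar doesn't change zmultiples
lemma zmultiples_unit_smul {N : ℕ} [NeZero N] (u : (ZMod N)ˣ) (v : ZMod N × ZMod N) :
    zmultiples ((u : ZMod N) • v) = zmultiples v := by
  have key : ∀ (w : ZMod N) (x : ZMod N × ZMod N), w • x ∈ zmultiples x := by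
    intro w x
    refine mem_zmultiples_iff.mpr ⟨(w.val : ℤ), ?_⟩
    have : ((w.val : ℤ) : ZMod N) • x = w • x := by
      have hw : ((w.val : ℤ) : ZMod N) = w := by
        push_cast
        exact ZMod.natCast_rightInverse w
      rw [hw]
    rw [← this]
    exact (Int.cast_smul_eq_zsmul (ZMod N) ((w.val : ℤ)) x).symm
  refine le_antisymm ?_ ?_
  · rw [zmultiples_le]
    exact key _ _
  · rw [zmultiples_le]
    have : v = ((u⁻¹ : (ZMod N)ˣ) : ZMod N) • ((u : ZMod N) • v) := by
      rw [smul_smul, ← Units.val_mul, inv_mul_cancel, Units.val_one, one_smul]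
    nth_rewrite 2 [this]
    exact key _ _

lemma gen_pair_inj {R : Type*} [Ring R] {d₁ d₂ : R}
    (h : zmultiples ((1 : R), d₁) = zmultiples ((1 : R), d₂)) : d₁ = d₂ := by
  have hm : ((1 : R), d₂) ∈ zmultiples ((1 : R), d₁) := by
    rw [h]; exact mem_zmultiples _
  obtain ⟨k, hk⟩ := hm
  rw [Prod.ext_iff] at hk
  obtain ⟨h1, h2⟩ := hk
  simp only [Prod.smul_fst, Prod.smul_snd] at h1 h2
  rw [zsmul_eq_mul, mul_one] at h1
  rw [zsmul_eq_mul, h1, one_mul] at h2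
  exact h2

lemma cast_isUnit_iff {p : ℕ} (hp : p.Prime) {n : ℕ} (hn : 2 ≤ n) (a : ZMod (p ^ n)) :
    IsUnit ((ZMod.castHom (pow_dvd_pow p (Nat.sub_le n 1)) (ZMod (p ^ (n - 1)))) a) ↔
      IsUnit a := by
  haveI : NeZero (p ^ n) := ⟨(pow_pos hp.pos n).ne'⟩
  haveI : NeZero (p ^ (n - 1)) := ⟨(pow_pos hp.pos (n - 1)).ne'⟩
  have h1 : (ZMod.castHom (pow_dvd_pow p (Nat.sub_le n 1)) (ZMod (p ^ (n - 1)))) a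
      = ((a.val : ℕ) : ZMod (p ^ (n - 1))) := by
    rw [ZMod.castHom_apply, ZMod.natCast_val]
  have h2 : a = ((a.val : ℕ) : ZMod (p ^ n)) := (ZMod.natCast_rightInverse a).symm
  rw [h1]
  conv_rhs => rw [h2]
  rw [ZMod.isUnit_iff_coprime, ZMod.isUnit_iff_coprime,
    Nat.coprime_pow_right_iff (by omega : 0 < n - 1),
    Nat.coprime_pow_right_iff (by omega : 0 < n)]

lemma fiber_ncard_s13 {p : ℕ} (hp : p.Prime) {n : ℕ} (hn : 2 ≤ n) (c' : ZMod (p ^ (n - 1))) :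
    {c : ZMod (p ^ n) |
      (ZMod.castHom (pow_dvd_pow p (Nat.sub_le n 1)) (ZMod (p ^ (n - 1)))) c = c'}.ncard = p := by
  haveI : NeZero (p ^ n) := ⟨(pow_pos hp.pos n).ne'⟩
  haveI : NeZero (p ^ (n - 1)) := ⟨(pow_pos hp.pos (n - 1)).ne'⟩
  set f : ZMod (p ^ n) →+ ZMod (p ^ (n - 1)) :=
    (ZMod.castHom (pow_dvd_pow p (Nat.sub_le n 1)) (ZMod (p ^ (n - 1)))).toAddMonoidHom with hf
  have hfs : Function.Surjective f := by
    intro y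
    refine ⟨((y.val : ℕ) : ZMod (p ^ n)), ?_⟩
    have h := map_natCast
      (ZMod.castHom (pow_dvd_pow p (Nat.sub_le n 1)) (ZMod (p ^ (n - 1)))) y.val
    exact h.trans (ZMod.natCast_rightInverse y)
  -- kernel cardinality
  have hcard : Nat.card f.ker = p := by
    have h1 : Nat.card (ZMod (p ^ n))
        = Nat.card (ZMod (p ^ n) ⧸ f.ker) * Nat.card f.ker :=
      AddSubgroup.card_eq_card_quotient_mul_card_addSubgroup _
    have h2 : Nat.card (ZMod (p ^ n) ⧸ f.ker) = Nat.card (ZMod (p ^ (n - 1))) :=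
      Nat.card_congr (QuotientAddGroup.quotientKerEquivOfSurjective f hfs).toEquiv
    rw [h2, Nat.card_zmod, Nat.card_zmod] at h1
    have h3 : p ^ n = p ^ (n - 1) * p := by
      rw [← pow_succ]; congr 1; omega
    have h4 : p ^ (n - 1) * Nat.card f.ker = p ^ (n - 1) * p := by
      rw [← h1]; exact h3
    exact Nat.eq_of_mul_eq_mul_left (pow_pos hp.pos (n - 1)) h4
  -- translate the fiber to the kernel
  obtain ⟨c₀, hc₀⟩ := hfs c'
  have hset : {c : ZMod (p ^ n) |
      (ZMod.castHom (pow_dvd_pow p (Nat.sub_le n 1)) (ZMod (p ^ (n - 1)))) c = c'}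
      = (fun k => k + c₀) '' (f.ker : Set (ZMod (p ^ n))) := by
    ext c
    simp only [Set.mem_setOf_eq, Set.mem_image, SetLike.mem_coe, AddMonoidHom.mem_ker]
    constructor
    · intro hc
      have hc' : f c = c' := hc
      exact ⟨c - c₀, by rw [map_sub, hc', hc₀, sub_self], by ring⟩
    · rintro ⟨k, hk, rfl⟩
      show f (k + c₀) = c'
      rw [map_add, hk, hc₀, zero_add]
  rw [hset, Set.ncard_image_of_injective _ (add_left_injective c₀)]
  rw [← Nat.card_coe_set_eq]
  exact hcard

lemma pair_normalize {N : ℕ} (u : (ZMod N)ˣ) (b : ZMod N) :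
    (((u : ZMod N), b) : ZMod N × ZMod N)
      = (u : ZMod N) • (((1 : ZMod N), ((u⁻¹ : (ZMod N)ˣ) : ZMod N) * b)) := by
  rw [Prod.smul_mk, smul_eq_mul, smul_eq_mul, mul_one, ← mul_assoc, Units.mul_inv, one_mul]

lemma zmultiples_pair_normalize {N : ℕ} [NeZero N] (u : (ZMod N)ˣ) (b : ZMod N) :
    zmultiples (((u : ZMod N), b) : ZMod N × ZMod N)
      = zmultiples (((1 : ZMod N), ((u⁻¹ : (ZMod N)ˣ) : ZMod N) * b)) := by
  rw [pair_normalize, zmultiples_unit_smul]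

/-- The coordinatewise reduction homomorphism
`π : (ZMod p^n)² → (ZMod p^{n-1})²`. -/
def redHom (p n : ℕ) :
    (ZMod (p ^ n) × ZMod (p ^ n)) →+ (ZMod (p ^ (n - 1)) × ZMod (p ^ (n - 1))) :=
  AddMonoidHom.prodMap
    (ZMod.castHom (pow_dvd_pow p (Nat.sub_le n 1)) (ZMod (p ^ (n - 1)))).toAddMonoidHom
    (ZMod.castHom (pow_dvd_pow p (Nat.sub_le n 1)) (ZMod (p ^ (n - 1)))).toAddMonoidHom

/-- A subgroup is cyclic of order `m` if it is generated by a single element of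
additive order `m`. -/
def IsCyclicOfOrder {G : Type*} [AddGroup G] (K : AddSubgroup G) (m : ℕ) : Prop :=
  ∃ x : G, K = AddSubgroup.zmultiples x ∧ addOrderOf x = m

lemma redHom_pair {p n : ℕ} (a b : ZMod (p ^ n)) :
    redHom p n (a, b)
      = ((ZMod.castHom (pow_dvd_pow p (Nat.sub_le n 1)) (ZMod (p ^ (n - 1)))) a,
         (ZMod.castHom (pow_dvd_pow p (Nat.sub_le n 1)) (ZMod (p ^ (n - 1)))) b) := rfl

lemma countA (p : ℕ) (hp : p.Prime) (n : ℕ) (hn : 2 ≤ n) (a' b' : ZMod (p ^ (n - 1)))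
    (ha : IsUnit a') :
    {K : AddSubgroup (ZMod (p ^ n) × ZMod (p ^ n)) |
      IsCyclicOfOrder K (p ^ n) ∧ K.map (redHom p n) = zmultiples ((a', b'))}.ncard = p := by
  haveI : NeZero (p ^ n) := ⟨(pow_pos hp.pos n).ne'⟩
  haveI : NeZero (p ^ (n - 1)) := ⟨(pow_pos hp.pos (n - 1)).ne'⟩
  obtain ⟨u, hu⟩ := ha
  set c' : ZMod (p ^ (n - 1)) := ((u⁻¹ : (ZMod (p ^ (n - 1)))ˣ) : ZMod (p ^ (n - 1))) * b'
    with hc'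
  have hK' : zmultiples ((a', b')) = zmultiples (((1 : ZMod (p ^ (n - 1))), c')) := by
    rw [← hu]; exact zmultiples_pair_normalize u b'
  rw [hK']
  have hred : ∀ c : ZMod (p ^ n), redHom p n ((1 : ZMod (p ^ n)), c)
      = ((1 : ZMod (p ^ (n - 1))),
        (ZMod.castHom (pow_dvd_pow p (Nat.sub_le n 1)) (ZMod (p ^ (n - 1)))) c) := by
    intro c
    rw [redHom_pair, map_one]
  have hset : {K : AddSubgroup (ZMod (p ^ n) × ZMod (p ^ n)) |
      IsCyclicOfOrder K (p ^ n) ∧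
        K.map (redHom p n) = zmultiples (((1 : ZMod (p ^ (n - 1))), c'))}
      = (fun c : ZMod (p ^ n) => zmultiples (((1 : ZMod (p ^ n)), c))) ''
        {c : ZMod (p ^ n) |
          (ZMod.castHom (pow_dvd_pow p (Nat.sub_le n 1)) (ZMod (p ^ (n - 1)))) c = c'} := by
    ext K
    simp only [Set.mem_setOf_eq, Set.mem_image]
    constructor
    · rintro ⟨⟨x, hxK, hxord⟩, hmap⟩
      obtain ⟨a, b⟩ := x
      subst hxK
      rw [AddMonoidHom.map_zmultiples] at hmap
      have hmem : ((1 : ZMod (p ^ (n - 1))), c') ∈ zmultiples (redHom p n (a, b)) := by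
        rw [hmap]; exact mem_zmultiples _
      obtain ⟨k, hk⟩ := mem_zmultiples_iff.mp hmem
      rw [redHom_pair, Prod.ext_iff] at hk
      simp only [Prod.smul_fst, Prod.smul_snd] at hk
      have hk1 : (k : ZMod (p ^ (n - 1)))
          * (ZMod.castHom (pow_dvd_pow p (Nat.sub_le n 1)) (ZMod (p ^ (n - 1)))) a = 1 := by
        rw [← zsmul_eq_mul]; exact hk.1
      have hua : IsUnit a := (cast_isUnit_iff hp hn a).mp
        (IsUnit.of_mul_eq_one _ (by rw [mul_comm]; exact hk1))
      obtain ⟨v, hv⟩ := hua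
      set c : ZMod (p ^ n) := ((v⁻¹ : (ZMod (p ^ n))ˣ) : ZMod (p ^ n)) * b with hcdef
      have hKeq : zmultiples ((a, b)) = zmultiples (((1 : ZMod (p ^ n)), c)) := by
        rw [← hv]; exact zmultiples_pair_normalize v b
      refine ⟨c, ?_, hKeq.symm⟩
      have hz : zmultiples (redHom p n ((1 : ZMod (p ^ n)), c))
          = zmultiples (((1 : ZMod (p ^ (n - 1))), c')) := by
        rw [← AddMonoidHom.map_zmultiples, ← hKeq, AddMonoidHom.map_zmultiples, hmap]
      rw [hred] at hz
      exact gen_pair_inj hz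
    · rintro ⟨c, hc, rfl⟩
      refine ⟨⟨((1 : ZMod (p ^ n)), c), rfl, pair_addOrderOf (Or.inl isUnit_one)⟩, ?_⟩
      rw [AddMonoidHom.map_zmultiples, hred, hc]
  rw [hset, Set.ncard_image_of_injective _ (fun c₁ c₂ h => gen_pair_inj h)]
  exact fiber_ncard_s13 hp hn c'

/-- The swap automorphism on `(ZMod N)²` as an `AddMonoidHom`. -/
def swapHom (N : ℕ) : (ZMod N × ZMod N) →+ (ZMod N × ZMod N) :=
  (AddEquiv.prodComm : ZMod N × ZMod N ≃+ ZMod N × ZMod N).toAddMonoidHom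

lemma swapHom_inj (N : ℕ) : Function.Injective (swapHom N) :=
  (AddEquiv.prodComm : ZMod N × ZMod N ≃+ ZMod N × ZMod N).injective

lemma swap_mem (p : ℕ) (hp : p.Prime) (n : ℕ) (hn : 2 ≤ n)
    (a' b' : ZMod (p ^ (n - 1))) (K : AddSubgroup (ZMod (p ^ n) × ZMod (p ^ n)))
    (hK : IsCyclicOfOrder K (p ^ n) ∧ K.map (redHom p n) = zmultiples ((a', b'))) :
    IsCyclicOfOrder (K.map (swapHom (p ^ n))) (p ^ n) ∧
      (K.map (swapHom (p ^ n))).map (redHom p n) = zmultiples ((b', a')) := by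
  obtain ⟨⟨x, hxK, hxord⟩, hmap⟩ := hK
  constructor
  · refine ⟨swapHom (p ^ n) x, ?_, ?_⟩
    · rw [hxK, AddMonoidHom.map_zmultiples]
    · rw [addOrderOf_injective (swapHom (p ^ n)) (swapHom_inj (p ^ n)) x]
      exact hxord
  · rw [AddSubgroup.map_map]
    have hcomm : (redHom p n).comp (swapHom (p ^ n))
        = (swapHom (p ^ (n - 1))).comp (redHom p n) := rfl
    rw [hcomm, ← AddSubgroup.map_map, hmap, AddMonoidHom.map_zmultiples]
    rfl

lemma swap_invol (p n : ℕ) (K : AddSubgroup (ZMod (p ^ n) × ZMod (p ^ n))) :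
    (K.map (swapHom (p ^ n))).map (swapHom (p ^ n)) = K := by
  rw [AddSubgroup.map_map]
  have : (swapHom (p ^ n)).comp (swapHom (p ^ n)) = AddMonoidHom.id _ := rfl
  rw [this, AddSubgroup.map_id]

/-- If `K ≤ (ZMod p^n)²` is cyclic of order `p^n` then `π(K)` is cyclic of
order `p^{n-1}`; moreover every cyclic subgroup `K' ≤ (ZMod p^{n-1})²` of order
`p^{n-1}` is the image of exactly `p` cyclic subgroups of `(ZMod p^n)²` of
order `p^n`. -/
theorem statement13 (p : ℕ) (hp : p.Prime) (n : ℕ) (hn : 2 ≤ n) :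
    (∀ K : AddSubgroup (ZMod (p ^ n) × ZMod (p ^ n)),
      IsCyclicOfOrder K (p ^ n) →
        IsCyclicOfOrder (K.map (redHom p n)) (p ^ (n - 1))) ∧
    (∀ K' : AddSubgroup (ZMod (p ^ (n - 1)) × ZMod (p ^ (n - 1))),
      IsCyclicOfOrder K' (p ^ (n - 1)) →
        {K : AddSubgroup (ZMod (p ^ n) × ZMod (p ^ n)) |
          IsCyclicOfOrder K (p ^ n) ∧ K.map (redHom p n) = K'}.ncard = p) := by
  haveI : NeZero (p ^ n) := ⟨(pow_pos hp.pos n).ne'⟩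
  haveI : NeZero (p ^ (n - 1)) := ⟨(pow_pos hp.pos (n - 1)).ne'⟩
  constructor
  · rintro K ⟨x, hxK, hxord⟩
    obtain ⟨a, b⟩ := x
    rcases pair_unit_of_addOrderOf hp hxord with ha | hb
    · refine ⟨redHom p n (a, b), ?_, ?_⟩
      · rw [hxK, AddMonoidHom.map_zmultiples]
      · rw [redHom_pair]
        exact pair_addOrderOf (Or.inl (ha.map _))
    · refine ⟨redHom p n (a, b), ?_, ?_⟩
      · rw [hxK, AddMonoidHom.map_zmultiples]
      · rw [redHom_pair]
        exact pair_addOrderOf (Or.inr (hb.map _))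
  · rintro K' ⟨y, hyK', hyord⟩
    obtain ⟨a', b'⟩ := y
    subst hyK'
    rcases pair_unit_of_addOrderOf hp hyord with ha | hb
    · exact countA p hp n hn a' b' ha
    · have hsets : {K : AddSubgroup (ZMod (p ^ n) × ZMod (p ^ n)) |
          IsCyclicOfOrder K (p ^ n) ∧ K.map (redHom p n) = zmultiples ((a', b'))}
          = (fun K : AddSubgroup (ZMod (p ^ n) × ZMod (p ^ n)) => K.map (swapHom (p ^ n))) ''
            {K : AddSubgroup (ZMod (p ^ n) × ZMod (p ^ n)) |
              IsCyclicOfOrder K (p ^ n) ∧ K.map (redHom p n) = zmultiples ((b', a'))} := by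
        ext K
        simp only [Set.mem_setOf_eq, Set.mem_image]
        constructor
        · intro hK
          exact ⟨K.map (swapHom (p ^ n)), swap_mem p hp n hn a' b' K hK, swap_invol p n K⟩
        · rintro ⟨K₀, hK₀, rfl⟩
          exact swap_mem p hp n hn b' a' K₀ hK₀
      rw [hsets, Set.ncard_image_of_injective _
        (AddSubgroup.map_injective (swapHom_inj (p ^ n)))]
      exact countA p hp n hn b' a' hb
end

section
/- Let p be a prime, n ≥ 1, and K a non-cyclic additive subgroup of (ZMod p^n)². Then: (1) there is exactly one additive subgroup H ≤ K with K/H isomorphic to (ZMod p)², namely H = pK = {p • x : x ∈ K}; (2) K has exactly p + 1 additive subgroups of index p. -/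
/-- Multiplication by `p` as an additive group endomorphism. -/
def pSmulHom (p : ℕ) {G : Type*} [AddCommGroup G] : G →+ G :=
  AddMonoidHom.mk' (fun x => p • x) (fun a b => smul_add p a b)

lemma pSmulHom_apply (p : ℕ) {G : Type*} [AddCommGroup G] (x : G) :
    pSmulHom p x = p • x := rfl

/-- For an endomorphism of a finite abelian group, the quotient by the range has the
same cardinality as the kernel. -/
lemma card_quot_range {A : Type*} [AddCommGroup A] [Finite A] (f : A →+ A) :
    Nat.card (A ⧸ f.range) = Nat.card f.ker := by
  have h1 := AddSubgroup.card_eq_card_quotient_mul_card_addSubgroup f.range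
  have h2 := AddSubgroup.card_eq_card_quotient_mul_card_addSubgroup f.ker
  have h3 : Nat.card (A ⧸ f.ker) = Nat.card f.range :=
    Nat.card_congr (QuotientAddGroup.quotientKerEquivRange f).toEquiv
  rw [h3] at h2
  have hpos : 0 < Nat.card f.range := Nat.card_pos
  exact Nat.eq_of_mul_eq_mul_right hpos
    ((h1.symm.trans h2).trans (mul_comm _ _))

/-- The kernel of multiplication by `p` on `ZMod (p ^ n)` has cardinality `p`. -/
lemma card_ker_zmod {p : ℕ} (hp : p.Prime) {n : ℕ} (hn : 1 ≤ n) :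
    Nat.card (pSmulHom p : ZMod (p ^ n) →+ ZMod (p ^ n)).ker = p := by
  haveI : NeZero (p ^ n) := ⟨pow_ne_zero n hp.ne_zero⟩
  have hrange : (pSmulHom p : ZMod (p ^ n) →+ ZMod (p ^ n)).range
      = AddSubgroup.zmultiples ((p : ZMod (p ^ n))) := by
    ext x
    simp only [AddMonoidHom.mem_range, AddSubgroup.mem_zmultiples_iff, pSmulHom_apply]
    constructor
    · rintro ⟨y, rfl⟩
      refine ⟨(y.val : ℤ), ?_⟩
      rw [zsmul_eq_mul, Int.cast_natCast, ZMod.natCast_rightInverse y, nsmul_eq_mul,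
        mul_comm]
    · rintro ⟨k, rfl⟩
      refine ⟨((k : ZMod (p ^ n))), ?_⟩
      rw [zsmul_eq_mul, nsmul_eq_mul, mul_comm]
  have hdiv : p ^ n / p = p ^ (n - 1) := by
    simpa using Nat.pow_div hn hp.pos
  have hcr : Nat.card (pSmulHom p : ZMod (p ^ n) →+ ZMod (p ^ n)).range = p ^ (n - 1) := by
    rw [hrange, Nat.card_zmultiples, ZMod.addOrderOf_coe p (pow_ne_zero n hp.ne_zero),
      Nat.gcd_eq_right (dvd_pow_self p (by omega)), hdiv]
  have h1 := AddSubgroup.card_eq_card_quotient_mul_card_addSubgroup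
    (pSmulHom p : ZMod (p ^ n) →+ ZMod (p ^ n)).range
  rw [card_quot_range, hcr, Nat.card_zmod] at h1
  have hpn2 : p ^ n = p * p ^ (n - 1) := by
    rw [← pow_succ']; congr 1; omega
  exact Nat.eq_of_mul_eq_mul_right (pow_pos hp.pos _) (h1.symm.trans hpn2)

/-- The kernel of multiplication by `p` on `(ZMod (p ^ n))²` has cardinality `p ^ 2`. -/
lemma card_ker_prod {p : ℕ} (hp : p.Prime) {n : ℕ} (hn : 1 ≤ n) :
    Nat.card (pSmulHom p : ZMod (p ^ n) × ZMod (p ^ n) →+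
      ZMod (p ^ n) × ZMod (p ^ n)).ker = p ^ 2 := by
  haveI : NeZero (p ^ n) := ⟨pow_ne_zero n hp.ne_zero⟩
  have e : ((pSmulHom p : ZMod (p ^ n) × ZMod (p ^ n) →+ _).ker) ≃
      ((pSmulHom p : ZMod (p ^ n) →+ _).ker × (pSmulHom p : ZMod (p ^ n) →+ _).ker) :=
    { toFun := fun x => (⟨x.1.1, by
        have := x.2
        simp only [AddMonoidHom.mem_ker, pSmulHom_apply] at this ⊢
        exact congrArg Prod.fst this⟩, ⟨x.1.2, by
        have := x.2
        simp only [AddMonoidHom.mem_ker, pSmulHom_apply] at this ⊢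
        exact congrArg Prod.snd this⟩)
      invFun := fun y => ⟨(y.1.1, y.2.1), by
        have h1 := y.1.2
        have h2 := y.2.2
        simp only [AddMonoidHom.mem_ker, pSmulHom_apply] at h1 h2 ⊢
        exact Prod.ext h1 h2⟩
      left_inv := fun x => rfl
      right_inv := fun y => rfl }
  rw [Nat.card_congr e, Nat.card_prod, card_ker_zmod hp hn, sq]

/-- Nakayama-type lemma. -/
lemma nakayama {A : Type*} [AddCommGroup A] (p m : ℕ)
    (hA : ∀ z : A, p ^ m • z = 0) (x : A)
    (hx : ∀ y : A, ∃ k : ℤ, y - k • x ∈ (pSmulHom p : A →+ A).range) :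
    ∀ y : A, ∃ k : ℤ, k • x = y := by
  have key : ∀ (j : ℕ) (y : A), ∃ (k : ℤ) (u : A), y = k • x + (p : ℤ) ^ j • u := by
    intro j
    induction j with
    | zero => exact fun y => ⟨0, y, by simp⟩
    | succ j ih =>
      intro y
      obtain ⟨k, u, hu⟩ := ih y
      obtain ⟨b, hb⟩ := hx u
      obtain ⟨w, hw⟩ := hb
      rw [pSmulHom_apply] at hw
      have hw' : u = b • x + (p : ℤ) • w := by
        have h : (p : ℤ) • w = u - b • x := by rw [natCast_zsmul]; exact hw
        rw [h]; abel
      refine ⟨k + (p : ℤ) ^ j * b, w, ?_⟩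
      rw [hu, hw']
      module
  intro y
  obtain ⟨k, u, hu⟩ := key m y
  have h0 : (p : ℤ) ^ m • u = 0 := by
    rw [← Nat.cast_pow, natCast_zsmul]; exact hA u
  exact ⟨k, by rw [hu, h0, add_zero]⟩

/-- A finite elementary abelian `p`-group of cardinality `p²` is `(ZMod p)²`. -/
lemma iso_pp {p : ℕ} (hp : p.Prime) (V : Type*) [AddCommGroup V] [Finite V]
    (hV : ∀ v : V, p • v = 0) (hcard : Nat.card V = p ^ 2) :
    Nonempty (V ≃+ (ZMod p × ZMod p)) := by
  haveI : Fact p.Prime := ⟨hp⟩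
  haveI : NeZero p := ⟨hp.ne_zero⟩
  letI iM : Module (ZMod p) V := AddCommGroup.zmodModule hV
  letI : Fintype V := Fintype.ofFinite V
  haveI iF : Module.Finite (ZMod p) V := Module.Finite.of_finite
  haveI iFr : Module.Free (ZMod p) V := Module.Free.of_divisionRing (ZMod p) V
  have h1 : Fintype.card V = Fintype.card (ZMod p) ^ Module.finrank (ZMod p) V :=
    Module.card_eq_pow_finrank
  have h2 : Fintype.card (ZMod p × ZMod p)
      = Fintype.card (ZMod p) ^ Module.finrank (ZMod p) (ZMod p × ZMod p) :=
    Module.card_eq_pow_finrank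
  rw [ZMod.card] at h1 h2
  rw [Nat.card_eq_fintype_card] at hcard
  have ha : p ^ Module.finrank (ZMod p) V = p ^ 2 := by rw [← h1, hcard]
  have hb : p ^ Module.finrank (ZMod p) (ZMod p × ZMod p) = p ^ 2 := by
    rw [← h2, Fintype.card_prod, ZMod.card, sq]
  have hV2 : Module.finrank (ZMod p) V = 2 :=
    Nat.pow_right_injective hp.two_le ha
  have hW2 : Module.finrank (ZMod p) (ZMod p × ZMod p) = 2 :=
    Nat.pow_right_injective hp.two_le hb
  exact ⟨(@LinearEquiv.ofFinrankEq (ZMod p) V (ZMod p × ZMod p) _ _ iM iFr _ _ _ _ iF _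
    (hV2.trans hW2.symm)).toAddEquiv⟩

/-- The number of index-`p` subgroups of `(ZMod p)²` is `p + 1`. -/
lemma count_index_p {p : ℕ} (hp : p.Prime) :
    {H : AddSubgroup (ZMod p × ZMod p) | H.index = p}.ncard = p + 1 := by
  haveI : Fact p.Prime := ⟨hp⟩
  haveI : NeZero p := ⟨hp.ne_zero⟩
  have hcardW : Nat.card (ZMod p × ZMod p) = p ^ 2 := by
    rw [Nat.card_prod, Nat.card_zmod, sq]
  have hps : ∀ x : ZMod p, p • x = 0 := fun x => by
    rw [nsmul_eq_mul, ZMod.natCast_self, zero_mul]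
  have hsmul : ∀ x : ZMod p × ZMod p, p • x = 0 := fun x => Prod.ext (hps x.1) (hps x.2)
  have horder : ∀ x : ZMod p × ZMod p, x ≠ 0 → addOrderOf x = p := by
    intro x hx
    rcases (hp.eq_one_or_self_of_dvd _ (addOrderOf_dvd_of_nsmul_eq_zero (hsmul x))) with h | h
    · exact absurd (AddMonoid.addOrderOf_eq_one_iff.mp h) hx
    · exact h
  have hcardzm : ∀ x : ZMod p × ZMod p, x ≠ 0 →
      Nat.card (AddSubgroup.zmultiples x) = p := by
    intro x hx; rw [Nat.card_zmultiples, horder x hx]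
  have hindex : ∀ x : ZMod p × ZMod p, x ≠ 0 → (AddSubgroup.zmultiples x).index = p := by
    intro x hx
    have h := (AddSubgroup.zmultiples x).index_mul_card
    rw [hcardzm x hx, hcardW, sq] at h
    exact Nat.eq_of_mul_eq_mul_right hp.pos h
  have hsmul_val : ∀ (c : ZMod p) (x : ZMod p × ZMod p),
      ∃ k : ℤ, k • x = (c * x.1, c * x.2) := by
    intro c x
    refine ⟨(c.val : ℤ), ?_⟩
    have hc : ((c.val : ℤ) : ZMod p) = c := by
      rw [Int.cast_natCast]; exact ZMod.natCast_rightInverse c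
    have h1 : (c.val : ℤ) • x.1 = c * x.1 := by rw [zsmul_eq_mul, hc]
    have h2 : (c.val : ℤ) • x.2 = c * x.2 := by rw [zsmul_eq_mul, hc]
    exact Prod.ext h1 h2
  classical
  set L : Option (ZMod p) → AddSubgroup (ZMod p × ZMod p) :=
    fun o => o.elim (AddSubgroup.zmultiples ((0 : ZMod p), (1 : ZMod p)))
      (fun a => AddSubgroup.zmultiples ((1 : ZMod p), a)) with hL
  have hone : (1 : ZMod p) ≠ 0 := one_ne_zero
  have hLne : ∀ o : Option (ZMod p), ∃ x : ZMod p × ZMod p, x ≠ 0 ∧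
      L o = AddSubgroup.zmultiples x := by
    intro o
    cases o with
    | none => exact ⟨((0 : ZMod p), (1 : ZMod p)), by simp [Prod.ext_iff, hone], rfl⟩
    | some a => exact ⟨((1 : ZMod p), a), by simp [Prod.ext_iff, hone], rfl⟩
  have hset : {H : AddSubgroup (ZMod p × ZMod p) | H.index = p} = Set.range L := by
    ext H
    simp only [Set.mem_setOf_eq, Set.mem_range]
    constructor
    · intro hH
      -- card H = p
      have hcH : Nat.card H = p := by
        have h := H.index_mul_card
        rw [hH, hcardW, sq] at h
        exact Nat.eq_of_mul_eq_mul_left hp.pos h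
      have hnt : Nontrivial H := by
        rw [← Finite.one_lt_card_iff_nontrivial, hcH]
        exact hp.one_lt
      obtain ⟨⟨x, hxH⟩, hx0⟩ := exists_ne (0 : H)
      have hx0' : x ≠ 0 := fun h => hx0 (Subtype.ext h)
      have hle : AddSubgroup.zmultiples x ≤ H :=
        AddSubgroup.zmultiples_le.mpr hxH
      have hHx : AddSubgroup.zmultiples x = H :=
        AddSubgroup.eq_of_le_of_card_ge hle (by rw [hcH, hcardzm _ hx0'])
      by_cases h1 : x.1 = 0
      · have h2 : x.2 ≠ 0 := by
          intro h2; exact hx0' (Prod.ext h1 h2)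
        refine ⟨none, ?_⟩
        show AddSubgroup.zmultiples ((0 : ZMod p), (1 : ZMod p)) = H
        rw [← hHx]
        apply le_antisymm
        · rw [AddSubgroup.zmultiples_le]
          obtain ⟨k, hk⟩ := hsmul_val (x.2)⁻¹ x
          rw [AddSubgroup.mem_zmultiples_iff]
          refine ⟨k, ?_⟩
          rw [hk, h1, mul_zero, inv_mul_cancel₀ h2]
        · rw [AddSubgroup.zmultiples_le]
          obtain ⟨k, hk⟩ := hsmul_val (x.2) ((0 : ZMod p), (1 : ZMod p))
          rw [AddSubgroup.mem_zmultiples_iff]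
          refine ⟨k, ?_⟩
          rw [hk]
          simp only [mul_zero, mul_one]
          exact (Prod.ext h1.symm rfl)
      · refine ⟨some (x.1⁻¹ * x.2), ?_⟩
        show AddSubgroup.zmultiples ((1 : ZMod p), x.1⁻¹ * x.2) = H
        rw [← hHx]
        apply le_antisymm
        · rw [AddSubgroup.zmultiples_le]
          obtain ⟨k, hk⟩ := hsmul_val (x.1)⁻¹ x
          rw [AddSubgroup.mem_zmultiples_iff]
          refine ⟨k, ?_⟩
          rw [hk, inv_mul_cancel₀ h1]
        · rw [AddSubgroup.zmultiples_le]
          obtain ⟨k, hk⟩ := hsmul_val (x.1) ((1 : ZMod p), x.1⁻¹ * x.2)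
          rw [AddSubgroup.mem_zmultiples_iff]
          refine ⟨k, ?_⟩
          rw [hk]
          simp only [mul_one]
          rw [← mul_assoc, mul_inv_cancel₀ h1, one_mul]
    · rintro ⟨o, rfl⟩
      obtain ⟨x, hx, hxo⟩ := hLne o
      rw [hxo]
      exact hindex x hx
  have hLinj : Function.Injective L := by
    intro o1 o2 h
    match o1, o2 with
    | none, none => rfl
    | some a, some b =>
      have hmem : ((1 : ZMod p), a) ∈ AddSubgroup.zmultiples ((1 : ZMod p), b) := by
        rw [show AddSubgroup.zmultiples ((1 : ZMod p), b) = L (some b) from rfl, ← h]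
        exact AddSubgroup.mem_zmultiples _
      obtain ⟨k, hk⟩ := AddSubgroup.mem_zmultiples_iff.mp hmem
      have h1 : (k : ZMod p) * 1 = 1 := by
        have := congrArg Prod.fst hk
        rwa [show (k • ((1 : ZMod p), b)).1 = k • (1 : ZMod p) from rfl, zsmul_eq_mul] at this
      have h2 : (k : ZMod p) * b = a := by
        have := congrArg Prod.snd hk
        rwa [show (k • ((1 : ZMod p), b)).2 = k • b from rfl, zsmul_eq_mul] at this
      rw [mul_one] at h1
      rw [h1, one_mul] at h2
      rw [h2]
    | some a, none =>
      exfalso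
      have hmem : ((1 : ZMod p), a) ∈ AddSubgroup.zmultiples ((0 : ZMod p), (1 : ZMod p)) := by
        rw [show AddSubgroup.zmultiples ((0:ZMod p), (1:ZMod p)) = L none from rfl, ← h]
        exact AddSubgroup.mem_zmultiples _
      obtain ⟨k, hk⟩ := AddSubgroup.mem_zmultiples_iff.mp hmem
      have h1 : (k : ZMod p) * 0 = 1 := by
        have := congrArg Prod.fst hk
        rwa [show (k • ((0 : ZMod p), (1 : ZMod p))).1 = k • (0 : ZMod p) from rfl,
          zsmul_eq_mul] at this
      rw [mul_zero] at h1
      exact hone h1.symm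
    | none, some a =>
      exfalso
      have hmem : ((1 : ZMod p), a) ∈ AddSubgroup.zmultiples ((0 : ZMod p), (1 : ZMod p)) := by
        rw [show AddSubgroup.zmultiples ((0:ZMod p), (1:ZMod p)) = L none from rfl, h]
        exact AddSubgroup.mem_zmultiples _
      obtain ⟨k, hk⟩ := AddSubgroup.mem_zmultiples_iff.mp hmem
      have h1 : (k : ZMod p) * 0 = 1 := by
        have := congrArg Prod.fst hk
        rwa [show (k • ((0 : ZMod p), (1 : ZMod p))).1 = k • (0 : ZMod p) from rfl,
          zsmul_eq_mul] at this
      rw [mul_zero] at h1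
      exact hone h1.symm
  rw [hset, ← Set.image_univ, Set.ncard_image_of_injective _ hLinj, Set.ncard_univ,
    Nat.card_eq_fintype_card, Fintype.card_option, ZMod.card]

/-- Let `p` be prime, `n ≥ 1`, and `K` a non-cyclic additive subgroup of
`(ZMod p^n)²`.  Then (1) a subgroup `H ≤ K` satisfies `K/H ≃ (ZMod p)²` if and
only if `H = pK`, and (2) `K` has exactly `p + 1` subgroups of index `p`. -/
theorem statement14 (p : ℕ) (hp : p.Prime) (n : ℕ) (hn : 1 ≤ n)
    (K : AddSubgroup (ZMod (p ^ n) × ZMod (p ^ n)))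
    (hK : ¬ ∃ x, K = AddSubgroup.zmultiples x) :
    (∀ H : AddSubgroup (ZMod (p ^ n) × ZMod (p ^ n)),
      (H ≤ K ∧ Nonempty ((↥K ⧸ H.addSubgroupOf K) ≃+ (ZMod p × ZMod p))) ↔
        H = K.map (pSmulHom p)) ∧
    {H : AddSubgroup (ZMod (p ^ n) × ZMod (p ^ n)) |
      H ≤ K ∧ (H.addSubgroupOf K).index = p}.ncard = p + 1 := by
  haveI : Fact p.Prime := ⟨hp⟩
  haveI : NeZero p := ⟨hp.ne_zero⟩
  haveI : NeZero (p ^ n) := ⟨pow_ne_zero n hp.ne_zero⟩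
  set N : AddSubgroup ↥K := (K.map (pSmulHom p)).addSubgroupOf K with hNdef
  have hNK : K.map (pSmulHom p) ≤ K := by
    rintro _ ⟨x, hx, rfl⟩
    exact K.nsmul_mem hx p
  have hmemN : ∀ x : ↥K, x ∈ N ↔ ∃ y : ↥K, p • y = x := by
    intro x
    rw [hNdef, AddSubgroup.mem_addSubgroupOf]
    constructor
    · rintro ⟨g, hg, hgx⟩
      rw [pSmulHom_apply] at hgx
      exact ⟨⟨g, hg⟩, Subtype.ext hgx⟩
    · rintro ⟨y, rfl⟩
      exact ⟨↑y, y.2, by rw [pSmulHom_apply]; rfl⟩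
  have hNr : N = (pSmulHom p : ↥K →+ ↥K).range := by
    ext x
    rw [hmemN, AddMonoidHom.mem_range]
    simp only [pSmulHom_apply]
  -- annihilation facts
  have hannG : ∀ z : ZMod (p ^ n) × ZMod (p ^ n), p ^ n • z = 0 := by
    intro z
    have hc : ∀ c : ZMod (p ^ n), p ^ n • c = 0 := fun c => by
      rw [nsmul_eq_mul, ZMod.natCast_self, zero_mul]
    exact Prod.ext (hc z.1) (hc z.2)
  have hannK : ∀ z : ↥K, p ^ n • z = 0 := fun z => Subtype.ext (hannG z)
  have hannW : ∀ w : ZMod p × ZMod p, p • w = 0 := by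
    intro w
    have hc : ∀ c : ZMod p, p • c = 0 := fun c => by
      rw [nsmul_eq_mul, ZMod.natCast_self, zero_mul]
    exact Prod.ext (hc w.1) (hc w.2)
  -- cardinality of the quotient
  have hQK : Nat.card (↥K ⧸ N) = Nat.card (pSmulHom p : ↥K →+ ↥K).ker := by
    rw [hNr]; exact card_quot_range _
  have hker_le : Nat.card (pSmulHom p : ↥K →+ ↥K).ker ≤ p ^ 2 := by
    rw [← card_ker_prod hp hn]
    refine Nat.card_le_card_of_injective
      (fun x => (⟨(x : ↥K), ?_⟩ :
        (pSmulHom p : ZMod (p ^ n) × ZMod (p ^ n) →+ _).ker)) ?_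
    · have hx := x.2
      rw [AddMonoidHom.mem_ker, pSmulHom_apply] at hx ⊢
      have : ((p • (x : ↥K) : ↥K) : ZMod (p ^ n) × ZMod (p ^ n)) = p • ((x : ↥K) :
        ZMod (p ^ n) × ZMod (p ^ n)) := rfl
      rw [← this, hx]; rfl
    · intro a b hab
      injection hab with h
      exact Subtype.ext (Subtype.ext h)
  have hQle : Nat.card (↥K ⧸ N) ≤ p ^ 2 := hQK ▸ hker_le
  have hQdvd : Nat.card (↥K ⧸ N) ∣ p ^ (2 * n) := by
    have h1 : Nat.card (↥K ⧸ N) ∣ Nat.card ↥K :=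
      AddSubgroup.card_quotient_dvd_card N
    have h2 : Nat.card ↥K ∣ Nat.card (ZMod (p ^ n) × ZMod (p ^ n)) :=
      AddSubgroup.card_addSubgroup_dvd_card K
    have h3 : Nat.card (ZMod (p ^ n) × ZMod (p ^ n)) = p ^ (2 * n) := by
      rw [Nat.card_prod, Nat.card_zmod, ← pow_add, two_mul]
    exact h3 ▸ h1.trans h2
  -- noncyclicity transfer
  have hcyc : ¬ IsAddCyclic (↥K ⧸ N) := by
    rintro ⟨g, hg⟩
    obtain ⟨x, rfl⟩ := QuotientAddGroup.mk'_surjective N g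
    apply hK
    refine ⟨(x : ZMod (p ^ n) × ZMod (p ^ n)), ?_⟩
    have hx : ∀ y : ↥K, ∃ k : ℤ, y - k • x ∈ (pSmulHom p : ↥K →+ ↥K).range := by
      intro y
      obtain ⟨k, hk⟩ := hg (QuotientAddGroup.mk' N y)
      have hk' : k • (QuotientAddGroup.mk' N) x = (QuotientAddGroup.mk' N) y := hk
      refine ⟨k, ?_⟩
      rw [← hNr]
      have h : QuotientAddGroup.mk' N (y - k • x) = 0 := by
        rw [map_sub, map_zsmul, hk', sub_self]
      rwa [QuotientAddGroup.mk'_apply, QuotientAddGroup.eq_zero_iff] at h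
    have hgen := nakayama p n hannK x hx
    ext z
    constructor
    · intro hz
      obtain ⟨k, hk⟩ := hgen ⟨z, hz⟩
      rw [AddSubgroup.mem_zmultiples_iff]
      exact ⟨k, congrArg Subtype.val hk⟩
    · intro hz
      obtain ⟨k, hk⟩ := AddSubgroup.mem_zmultiples_iff.mp hz
      rw [← hk]
      exact K.zsmul_mem x.2 k
  -- the quotient has cardinality p ^ 2
  obtain ⟨d, hd_le, hd⟩ := (Nat.dvd_prime_pow hp).mp hQdvd
  have hd2 : d ≤ 2 := by
    rw [hd] at hQle
    exact (Nat.pow_le_pow_iff_right hp.one_lt).mp hQle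
  have hcard2 : Nat.card (↥K ⧸ N) = p ^ 2 := by
    rcases Nat.lt_or_ge d 2 with hlt | hge
    · exfalso
      apply hcyc
      interval_cases d
      · rw [pow_zero] at hd
        haveI : Subsingleton (↥K ⧸ N) := Nat.card_eq_one_iff_unique.mp hd |>.1
        exact ⟨0, fun y => ⟨0, Subsingleton.elim _ _⟩⟩
      · rw [pow_one] at hd
        exact isAddCyclic_of_prime_card hd
    · rw [hd]; congr 1; omega
  have hQann : ∀ v : ↥K ⧸ N, p • v = 0 := by
    intro v
    obtain ⟨y, rfl⟩ := QuotientAddGroup.mk'_surjective N v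
    rw [← map_nsmul, QuotientAddGroup.mk'_apply, QuotientAddGroup.eq_zero_iff]
    exact (hmemN _).mpr ⟨y, rfl⟩
  obtain ⟨e⟩ := iso_pp hp (↥K ⧸ N) hQann hcard2
  constructor
  · -- part (1)
    intro H
    constructor
    · rintro ⟨hHK, ⟨q⟩⟩
      have hNH : N ≤ H.addSubgroupOf K := by
        intro z hz
        obtain ⟨y, rfl⟩ := (hmemN z).mp hz
        have h0 : ((p • y : ↥K) : ↥K ⧸ H.addSubgroupOf K) = 0 := by
          apply q.injective
          rw [map_zero]
          have : ((p • y : ↥K) : ↥K ⧸ H.addSubgroupOf K) =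
              p • ((y : ↥K) : ↥K ⧸ H.addSubgroupOf K) := by
            exact QuotientAddGroup.mk_nsmul _ y p
          rw [this, map_nsmul, hannW]
        exact (QuotientAddGroup.eq_zero_iff _).mp h0
      have hc1 : Nat.card (↥K ⧸ H.addSubgroupOf K) = p ^ 2 := by
        rw [Nat.card_congr q.toEquiv, Nat.card_prod, Nat.card_zmod, sq]
      have c1 := AddSubgroup.card_eq_card_quotient_mul_card_addSubgroup N
      have c2 := AddSubgroup.card_eq_card_quotient_mul_card_addSubgroup
        (H.addSubgroupOf K)
      rw [hcard2] at c1
      rw [hc1] at c2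
      have hcards : Nat.card (H.addSubgroupOf K) = Nat.card N :=
        Nat.eq_of_mul_eq_mul_left (pow_pos hp.pos 2) (c2.symm.trans c1)
      have heq : N = H.addSubgroupOf K :=
        AddSubgroup.eq_of_le_of_card_ge hNH (le_of_eq hcards)
      have e1 : (H.addSubgroupOf K).map K.subtype = H := by
        rw [AddSubgroup.addSubgroupOf_map_subtype]; exact inf_eq_left.mpr hHK
      have e2 : N.map K.subtype = K.map (pSmulHom p) := by
        rw [hNdef, AddSubgroup.addSubgroupOf_map_subtype]; exact inf_eq_left.mpr hNK
      rw [← e1, ← heq, e2]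
    · rintro rfl
      exact ⟨hNK, ⟨e⟩⟩
  · -- part (2)
    set φ : ↥K →+ ZMod p × ZMod p := e.toAddMonoidHom.comp (QuotientAddGroup.mk' N)
      with hφdef
    have hφs : Function.Surjective ⇑φ := by
      rw [hφdef]
      exact fun w => by
        obtain ⟨v, hv⟩ := e.surjective w
        obtain ⟨y, hy⟩ := QuotientAddGroup.mk'_surjective N v
        exact ⟨y, by simp [AddMonoidHom.comp_apply, hy, hv]⟩
    have hφker : φ.ker = N := by
      ext z
      rw [AddMonoidHom.mem_ker, hφdef, AddMonoidHom.comp_apply]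
      constructor
      · intro h
        have : (QuotientAddGroup.mk' N) z = 0 := by
          apply e.injective; rw [map_zero]; exact h
        rwa [QuotientAddGroup.mk'_apply, QuotientAddGroup.eq_zero_iff] at this
      · intro h
        have : (QuotientAddGroup.mk' N) z = 0 := by
          rw [QuotientAddGroup.mk'_apply, QuotientAddGroup.eq_zero_iff]; exact h
        rw [this, map_zero]
    have hcontain : ∀ H₀ : AddSubgroup ↥K, H₀.index = p → N ≤ H₀ := by
      intro H₀ hidx z hz
      obtain ⟨y, rfl⟩ := (hmemN z).mp hz
      have h0 : ((p • y : ↥K) : ↥K ⧸ H₀) = 0 := by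
        have h1 : ((p • y : ↥K) : ↥K ⧸ H₀) = p • ((y : ↥K) : ↥K ⧸ H₀) :=
          QuotientAddGroup.mk_nsmul _ y p
        have h2 := card_nsmul_eq_zero' (x := ((y : ↥K) : ↥K ⧸ H₀))
        rw [← AddSubgroup.index_eq_card, hidx] at h2
        rw [h1]
        exact h2
      exact (QuotientAddGroup.eq_zero_iff _).mp h0
    have hS : {H : AddSubgroup (ZMod (p ^ n) × ZMod (p ^ n)) |
        H ≤ K ∧ (H.addSubgroupOf K).index = p} =
        (fun (H₀ : AddSubgroup ↥K) => H₀.map K.subtype) ''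
          {H₀ : AddSubgroup ↥K | H₀.index = p} := by
      ext H
      simp only [Set.mem_setOf_eq, Set.mem_image]
      constructor
      · rintro ⟨h1, h2⟩
        refine ⟨H.addSubgroupOf K, h2, ?_⟩
        rw [AddSubgroup.addSubgroupOf_map_subtype]; exact inf_eq_left.mpr h1
      · rintro ⟨H₀, h1, rfl⟩
        constructor
        · rintro _ ⟨y, hy, rfl⟩
          exact y.2
        · have : (H₀.map K.subtype).addSubgroupOf K = H₀ := by
            ext z
            rw [AddSubgroup.mem_addSubgroupOf]
            constructor
            · rintro ⟨w, hw, hwz⟩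
              have : w = z := Subtype.ext hwz
              rwa [← this]
            · intro h
              exact ⟨z, h, rfl⟩
          rw [this]; exact h1
    have hT : {H₀ : AddSubgroup ↥K | H₀.index = p} =
        (AddSubgroup.comap φ) '' {H' : AddSubgroup (ZMod p × ZMod p) | H'.index = p} := by
      ext H₀
      simp only [Set.mem_setOf_eq, Set.mem_image]
      constructor
      · intro h1
        have hcm : AddSubgroup.comap φ (H₀.map φ) = H₀ := by
          rw [AddSubgroup.comap_map_eq, hφker, sup_eq_left.mpr (hcontain H₀ h1)]
        refine ⟨H₀.map φ, ?_, hcm⟩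
        calc (H₀.map φ).index
            = (AddSubgroup.comap φ (H₀.map φ)).index :=
              (AddSubgroup.index_comap_of_surjective _ hφs).symm
          _ = H₀.index := by rw [hcm]
          _ = p := h1
      · rintro ⟨H', h1, rfl⟩
        rw [AddSubgroup.index_comap_of_surjective _ hφs]
        exact h1
    rw [hS, Set.ncard_image_of_injective _
      (AddSubgroup.map_injective (AddSubgroup.subtype_injective K)), hT,
      Set.ncard_image_of_injective _ (AddSubgroup.comap_injective hφs),
      count_index_p hp]
end

section
/- For all integers n ≥ 1 and N ≥ 0, the monomial X₁·X₂⋯Xₙ divides the polynomial ∑_{S ⊆ {1,…,n}} (−1)^{|S|} · (∑_{i ∈ S} X_i)^N in ℤ[X₁,…,Xₙ]. (This is the divisibility ensuring that the vertex weight W_g(w) = (∏᷈ᵢ wᵢ)^{-1}·(∑_{S}(−1)^{|S|} w_S^{n+2g−2})·(−1)^{n+g−1}/(n+2g−2)! is a polynomial in w.) -/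
open MvPolynomial

private lemma prime_X_int {n : ℕ} (j : Fin n) : Prime (X j : MvPolynomial (Fin n) ℤ) := by
  classical
  let e : MvPolynomial (Fin n) ℤ ≃ₐ[ℤ] Polynomial (MvPolynomial {b : Fin n // b ≠ j} ℤ) :=
    (renameEquiv ℤ (Equiv.optionSubtypeNe j).symm).trans
      (optionEquivLeft ℤ {b : Fin n // b ≠ j})
  rw [← MulEquiv.prime_iff e.toMulEquiv]
  have he : e (X j) = Polynomial.X := by
    simp [e, renameEquiv_apply, rename_X, Equiv.optionSubtypeNe_symm_self,
      optionEquivLeft_X_none]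
  have : (e.toMulEquiv : MvPolynomial (Fin n) ℤ → _) (X j) = e (X j) := rfl
  rw [show (e.toMulEquiv) (X j) = e (X j) from rfl, he]
  exact Polynomial.prime_X

private lemma X_dvd_sum_int (n N : ℕ) (j : Fin n) :
    (X j : MvPolynomial (Fin n) ℤ) ∣
      ∑ S : Finset (Fin n),
        (-1 : MvPolynomial (Fin n) ℤ) ^ S.card * (∑ i ∈ S, X i) ^ N := by
  classical
  set f : Finset (Fin n) → MvPolynomial (Fin n) ℤ :=
    fun S => (-1 : MvPolynomial (Fin n) ℤ) ^ S.card * (∑ i ∈ S, X i) ^ N with hf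
  rw [← Finset.sum_filter_add_sum_filter_not Finset.univ (fun S => j ∈ S) f]
  have h1 : ∑ S ∈ Finset.univ.filter (fun S => j ∈ S), f S
      = ∑ S ∈ Finset.univ.filter (fun S => j ∉ S), f (insert j S) := by
    refine Finset.sum_bij' (fun S _ => S.erase j) (fun S _ => insert j S) ?_ ?_ ?_ ?_ ?_
    · intro S hS; simp [Finset.mem_filter] at hS ⊢
    · intro S hS; simp [Finset.mem_filter] at hS ⊢
    · intro S hS; simp [Finset.mem_filter] at hS; exact Finset.insert_erase hS
    · intro S hS; simp [Finset.mem_filter] at hS; exact Finset.erase_insert hS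
    · intro S hS; simp [Finset.mem_filter] at hS
      rw [Finset.insert_erase hS]
  rw [h1, ← Finset.sum_add_distrib]
  refine Finset.dvd_sum fun S hS => ?_
  simp only [Finset.mem_filter] at hS
  have hcard : (insert j S).card = S.card + 1 := Finset.card_insert_of_notMem hS.2
  have hsum : (∑ i ∈ insert j S, (X i : MvPolynomial (Fin n) ℤ))
      = X j + ∑ i ∈ S, X i := Finset.sum_insert hS.2
  have hdvd : (X j : MvPolynomial (Fin n) ℤ) ∣
      (∑ i ∈ insert j S, (X i : MvPolynomial (Fin n) ℤ)) ^ N - (∑ i ∈ S, X i) ^ N := by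
    rw [hsum]
    have h2 := sub_dvd_pow_sub_pow (X j + ∑ i ∈ S, (X i : MvPolynomial (Fin n) ℤ))
      (∑ i ∈ S, X i) N
    rwa [add_sub_cancel_right] at h2
  have : f (insert j S) + f S
      = (-(-1 : MvPolynomial (Fin n) ℤ) ^ S.card) *
        ((∑ i ∈ insert j S, (X i : MvPolynomial (Fin n) ℤ)) ^ N - (∑ i ∈ S, X i) ^ N) := by
    simp only [hf, hcard, pow_succ]
    ring
  rw [this]
  exact Dvd.dvd.mul_left hdvd _

private lemma prod_X_dvd_int {n : ℕ} (f : MvPolynomial (Fin n) ℤ)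
    (h : ∀ j : Fin n, X j ∣ f) (s : Finset (Fin n)) : ∏ i ∈ s, X i ∣ f := by
  classical
  induction s using Finset.induction_on with
  | empty => simpa using one_dvd f
  | insert _ _ hj =>
    rename_i j t ih
    obtain ⟨g, rfl⟩ := ih
    have hprime := prime_X_int j
    have hXg : (X j : MvPolynomial (Fin n) ℤ) ∣ g := by
      rcases hprime.dvd_mul.mp (h j) with hd | hd
      · exfalso
        obtain ⟨i, hi, hdi⟩ := (hprime.dvd_finset_prod_iff _).mp hd
        rw [X_dvd_X] at hdi
        exact hj (hdi ▸ hi)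
      · exact hd
    obtain ⟨g', rfl⟩ := hXg
    rw [Finset.prod_insert hj]
    exact ⟨g', by ring⟩

/-- For all `n ≥ 1` and `N ≥ 0`, the monomial `X₁·X₂⋯Xₙ` divides
`∑_{S ⊆ {1,…,n}} (−1)^{|S|} · (∑_{i ∈ S} X_i)^N` in `ℤ[X₁,…,Xₙ]`. -/
theorem statement18 (n N : ℕ) (hn : 1 ≤ n) :
    (∏ i : Fin n, (X i : MvPolynomial (Fin n) ℤ)) ∣
      ∑ S : Finset (Fin n),
        (-1 : MvPolynomial (Fin n) ℤ) ^ S.card * (∑ i ∈ S, X i) ^ N := by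
  exact prod_X_dvd_int _ (fun j => X_dvd_sum_int n N j) Finset.univ
end

section
/- Let r ≥ 1 and let φ be a ℚ-multilinear map in 2r arguments from ℚ² to ℚ (φ : MultilinearMap over Fin (2r) copies of ℚ² with values in ℚ) which is invariant under the diagonal action of SL₂(ℤ): φ(A·x₁, …, A·x_{2r}) = φ(x₁, …, x_{2r}) for every A ∈ SL₂(ℤ) and all x₁,…,x_{2r} ∈ ℚ². Then for every 2×2 matrix M with rational entries and all x₁,…,x_{2r} ∈ ℚ²: φ(M·x₁, …, M·x_{2r}) = (det M)^r · φ(x₁, …, x_{2r}). -/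
open Polynomial Matrix Finset

noncomputable def evalPoly {n : ℕ} (φ : MultilinearMap ℚ (fun _ : Fin n => (Fin 2 → ℚ)) ℚ)
    (u v : Fin n → Fin 2 → ℚ) : ℚ[X] :=
  ∑ s : Finset (Fin n), Polynomial.C (φ (s.piecewise u v)) * X ^ (n - s.card)

lemma evalPoly_eval {n : ℕ} (φ : MultilinearMap ℚ (fun _ : Fin n => (Fin 2 → ℚ)) ℚ)
    (u v : Fin n → Fin 2 → ℚ) (t : ℚ) :
    (evalPoly φ u v).eval t = φ (fun i => u i + t • v i) := by
  have h : (fun i => u i + t • v i) = u + (fun i => t • v i) := rfl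
  rw [h, φ.map_add_univ, evalPoly, Polynomial.eval_finset_sum]
  refine Finset.sum_congr rfl fun s _ => ?_
  have h2 : s.piecewise u (fun i => t • v i) =
      fun i => (if i ∈ s then (1:ℚ) else t) • s.piecewise u v i := by
    funext i
    by_cases hi : i ∈ s <;> simp [Finset.piecewise, hi]
  rw [h2, φ.map_smul_univ]
  have h3 : (∏ i, (if i ∈ s then (1:ℚ) else t)) = t ^ (n - s.card) := by
    rw [Finset.prod_ite, Finset.prod_const, Finset.prod_const]
    simp [Finset.filter_mem_eq_inter, Finset.filter_not, Finset.card_compl]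
    rw [Finset.card_sdiff_of_subset (Finset.subset_univ s), Finset.card_univ, Fintype.card_fin]
  rw [h3, smul_eq_mul]
  simp only [eval_mul, eval_C, eval_pow, eval_X]
  ring

lemma eval_eq_of_int (p q : ℚ[X]) (h : ∀ m : ℤ, p.eval (m:ℚ) = q.eval (m:ℚ)) : p = q := by
  apply Polynomial.eq_of_infinite_eval_eq
  exact Set.infinite_of_injective_forall_mem (f := (Int.cast : ℤ → ℚ))
    Int.cast_injective (fun m => h m)

section
variable {n : ℕ} {φ : MultilinearMap ℚ (fun _ : Fin n => (Fin 2 → ℚ)) ℚ}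
variable (hφ : ∀ (A : Matrix.SpecialLinearGroup (Fin 2) ℤ) (x : Fin n → Fin 2 → ℚ),
      φ (fun i => ((A : Matrix (Fin 2) (Fin 2) ℤ).map (Int.cast : ℤ → ℚ)).mulVec (x i)) = φ x)

include hφ

lemma shear_R (t : ℚ) (x : Fin n → Fin 2 → ℚ) :
    φ (fun i => (!![1, t; 0, 1] : Matrix (Fin 2) (Fin 2) ℚ).mulVec (x i)) = φ x := by
  set v : Fin n → Fin 2 → ℚ := fun i => ![x i 1, 0] with hv
  have key : ∀ (c : ℚ) i, (!![1, c; 0, 1] : Matrix (Fin 2) (Fin 2) ℚ).mulVec (x i)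
      = x i + c • v i := by
    intro c i; funext j
    fin_cases j <;> simp [Matrix.mulVec, dotProduct, Fin.sum_univ_two, hv] <;> ring
  have hp : ∀ m : ℤ, (evalPoly φ x v).eval (m:ℚ) = (C (φ x)).eval (m:ℚ) := by
    intro m
    rw [evalPoly_eval, eval_C]
    have h2 := hφ ⟨!![1, m; 0, 1], by simp [Matrix.det_fin_two_of]⟩ x
    have hmap : (!![1, m; 0, 1] : Matrix (Fin 2) (Fin 2) ℤ).map (Int.cast : ℤ → ℚ)
        = !![1, (m:ℚ); 0, 1] := by
      funext a b; fin_cases a <;> fin_cases b <;> simp [Matrix.map_apply]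
    rw [← h2]
    congr 1; funext i
    rw [hmap, key]
  have hpq := eval_eq_of_int _ _ hp
  have : (fun i => (!![1, t; 0, 1] : Matrix (Fin 2) (Fin 2) ℚ).mulVec (x i))
      = fun i => x i + t • v i := funext fun i => key t i
  rw [this, ← evalPoly_eval, hpq, eval_C]

lemma shear_L (t : ℚ) (x : Fin n → Fin 2 → ℚ) :
    φ (fun i => (!![1, 0; t, 1] : Matrix (Fin 2) (Fin 2) ℚ).mulVec (x i)) = φ x := by
  set v : Fin n → Fin 2 → ℚ := fun i => ![0, x i 0] with hv
  have key : ∀ (c : ℚ) i, (!![1, 0; c, 1] : Matrix (Fin 2) (Fin 2) ℚ).mulVec (x i)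
      = x i + c • v i := by
    intro c i; funext j
    fin_cases j <;> simp [Matrix.mulVec, dotProduct, Fin.sum_univ_two, hv] <;> ring
  have hp : ∀ m : ℤ, (evalPoly φ x v).eval (m:ℚ) = (C (φ x)).eval (m:ℚ) := by
    intro m
    rw [evalPoly_eval, eval_C]
    have h2 := hφ ⟨!![1, 0; m, 1], by simp [Matrix.det_fin_two_of]⟩ x
    have hmap : (!![1, 0; m, 1] : Matrix (Fin 2) (Fin 2) ℤ).map (Int.cast : ℤ → ℚ)
        = !![1, 0; (m:ℚ), 1] := by
      funext a b; fin_cases a <;> fin_cases b <;> simp [Matrix.map_apply]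
    rw [← h2]
    congr 1; funext i
    rw [hmap, key]
  have hpq := eval_eq_of_int _ _ hp
  have : (fun i => (!![1, 0; t, 1] : Matrix (Fin 2) (Fin 2) ℚ).mulVec (x i))
      = fun i => x i + t • v i := funext fun i => key t i
  rw [this, ← evalPoly_eval, hpq, eval_C]

end

section
variable {n : ℕ} {φ : MultilinearMap ℚ (fun _ : Fin n => (Fin 2 → ℚ)) ℚ}

lemma comp_step (E Q : Matrix (Fin 2) (Fin 2) ℚ)
    (hE : ∀ y : Fin n → Fin 2 → ℚ, φ (fun i => E.mulVec (y i)) = φ y)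
    (x : Fin n → Fin 2 → ℚ) :
    φ (fun i => (E * Q).mulVec (x i)) = φ (fun i => Q.mulVec (x i)) := by
  have h : (fun i => (E * Q).mulVec (x i)) = fun i => E.mulVec (Q.mulVec (x i)) := by
    funext i; rw [← Matrix.mulVec_mulVec]
  rw [h]; exact hE _

variable (hφ : ∀ (A : Matrix.SpecialLinearGroup (Fin 2) ℤ) (x : Fin n → Fin 2 → ℚ),
      φ (fun i => ((A : Matrix (Fin 2) (Fin 2) ℤ).map (Int.cast : ℤ → ℚ)).mulVec (x i)) = φ x)

include hφ

lemma diag_inv (u : ℚ) (hu : u ≠ 0) (x : Fin n → Fin 2 → ℚ) :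
    φ (fun i => (!![u, 0; 0, u⁻¹] : Matrix (Fin 2) (Fin 2) ℚ).mulVec (x i)) = φ x := by
  have hdec : (!![u, 0; 0, u⁻¹] : Matrix (Fin 2) (Fin 2) ℚ)
      = !![1,u;0,1] * (!![1,0;-u⁻¹,1] * (!![1,u;0,1] * (!![1,-1;0,1]
          * (!![1,0;1,1] * !![1,-1;0,1])))) := by
    funext a b
    fin_cases a <;> fin_cases b <;>
      · simp [Matrix.mul_apply, Fin.sum_univ_two]
        try field_simp
        try norm_num
  rw [hdec, comp_step _ _ (shear_R hφ u), comp_step _ _ (shear_L hφ (-u⁻¹)),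
    comp_step _ _ (shear_R hφ u), comp_step _ _ (shear_R hφ (-1)),
    comp_step _ _ (shear_L hφ 1)]
  exact shear_R hφ (-1) x

lemma coeff_vanish (a b : Fin n → Fin 2 → ℚ) (ha : ∀ i, a i 1 = 0) (hb : ∀ i, b i 0 = 0)
    (s : Finset (Fin n)) (hs : 2 * s.card ≠ n) :
    φ (s.piecewise a b) = 0 := by
  have h := diag_inv hφ 2 two_ne_zero (s.piecewise a b)
  have key : (fun i => (!![(2:ℚ), 0; 0, (2:ℚ)⁻¹] : Matrix (Fin 2) (Fin 2) ℚ).mulVec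
        (s.piecewise a b i))
      = fun i => (if i ∈ s then (2:ℚ) else 2⁻¹) • s.piecewise a b i := by
    funext i
    by_cases hi : i ∈ s <;>
      · funext j
        fin_cases j <;>
          simp [Finset.piecewise, hi, Matrix.mulVec, dotProduct,
            Fin.sum_univ_two, ha i, hb i]
  rw [key, φ.map_smul_univ] at h
  have hprod : (∏ i, (if i ∈ s then (2:ℚ) else 2⁻¹)) = 2 ^ s.card * (2:ℚ)⁻¹ ^ (n - s.card) := by
    rw [Finset.prod_ite, Finset.prod_const, Finset.prod_const]
    simp [Finset.filter_mem_eq_inter, Finset.filter_not]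
    rw [Finset.card_sdiff_of_subset (Finset.subset_univ s), Finset.card_univ, Fintype.card_fin]
  rw [hprod, smul_eq_mul] at h
  by_contra hc
  have h2 : (2:ℚ) ^ s.card = 2 ^ (n - s.card) := by
    have h' : (2:ℚ) ^ s.card * 2⁻¹ ^ (n - s.card) = 1 :=
      mul_right_cancel₀ hc (by rw [one_mul]; exact h)
    rw [inv_pow, ← div_eq_mul_inv, div_eq_one_iff_eq (by positivity)] at h'
    exact h'
  have h3 : s.card = n - s.card := pow_right_injective₀ (by norm_num) (by norm_num) h2
  have h4 : s.card ≤ n := by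
    simpa using Finset.card_le_card (Finset.subset_univ s)
  omega

lemma diag_general (r : ℕ) (hn : n = 2 * r) (d1 d2 : ℚ) (x : Fin n → Fin 2 → ℚ) :
    φ (fun i => (!![d1, 0; 0, d2] : Matrix (Fin 2) (Fin 2) ℚ).mulVec (x i))
      = (d1 * d2) ^ r * φ x := by
  set a : Fin n → Fin 2 → ℚ := fun i => ![x i 0, 0] with hadef
  set b : Fin n → Fin 2 → ℚ := fun i => ![0, x i 1] with hbdef
  have ha : ∀ i, a i 1 = 0 := fun i => rfl
  have hb : ∀ i, b i 0 = 0 := fun i => rfl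
  have hsplit : (fun i => (!![d1, 0; 0, d2] : Matrix (Fin 2) (Fin 2) ℚ).mulVec (x i))
      = (fun i => d1 • a i) + (fun i => d2 • b i) := by
    funext i j
    fin_cases j <;>
      simp [hadef, hbdef, Matrix.mulVec, dotProduct, Fin.sum_univ_two]
  rw [hsplit, φ.map_add_univ]
  have hterm : ∀ s : Finset (Fin n),
      φ (s.piecewise (fun i => d1 • a i) (fun i => d2 • b i))
        = (d1 * d2) ^ r * φ (s.piecewise a b) := by
    intro s
    have hpw : s.piecewise (fun i => d1 • a i) (fun i => d2 • b i)
        = fun i => (if i ∈ s then d1 else d2) • s.piecewise a b i := by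
      funext i; by_cases hi : i ∈ s <;> simp [Finset.piecewise, hi]
    rw [hpw, φ.map_smul_univ, smul_eq_mul]
    by_cases hsc : 2 * s.card = n
    · have hcard : s.card = r := by omega
      have hprod : (∏ i, (if i ∈ s then d1 else d2)) = d1 ^ s.card * d2 ^ (n - s.card) := by
        rw [Finset.prod_ite, Finset.prod_const, Finset.prod_const]
        simp [Finset.filter_mem_eq_inter, Finset.filter_not]
        rw [Finset.card_sdiff_of_subset (Finset.subset_univ s), Finset.card_univ, Fintype.card_fin]
        try tauto
      rw [hprod, hcard]
      have h5 : n - r = r := by omega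
      rw [h5, mul_pow]
    · rw [coeff_vanish hφ a b ha hb s hsc]
      ring
  rw [Finset.sum_congr rfl (fun s _ => hterm s), ← Finset.mul_sum]
  congr 1
  rw [← φ.map_add_univ]
  congr 1
  funext i j
  fin_cases j <;> simp [hadef, hbdef]

lemma col_nonzero (r : ℕ) (hn : n = 2 * r) (M : Matrix (Fin 2) (Fin 2) ℚ)
    (hM : M 0 0 ≠ 0) (x : Fin n → Fin 2 → ℚ) :
    φ (fun i => M.mulVec (x i)) = M.det ^ r * φ x := by
  have hdec : M = !![1, 0; M 1 0 / M 0 0, 1]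
      * (!![M 0 0, 0; 0, M.det / M 0 0] * !![1, M 0 1 / M 0 0; 0, 1]) := by
    funext i j
    fin_cases i <;> fin_cases j <;>
      · simp [Matrix.mul_apply, Fin.sum_univ_two, Matrix.det_fin_two]
        try field_simp
        try ring
  rw [hdec, comp_step _ _ (shear_L hφ (M 1 0 / M 0 0))]
  have hsplit : (fun i => ((!![M 0 0, 0; 0, M.det / M 0 0] : Matrix (Fin 2) (Fin 2) ℚ)
        * !![1, M 0 1 / M 0 0; 0, 1]).mulVec (x i))
      = fun i => (!![M 0 0, 0; 0, M.det / M 0 0] : Matrix (Fin 2) (Fin 2) ℚ).mulVec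
          ((!![1, M 0 1 / M 0 0; 0, 1] : Matrix (Fin 2) (Fin 2) ℚ).mulVec (x i)) := by
    funext i; rw [← Matrix.mulVec_mulVec]
  rw [hsplit, diag_general hφ r hn, shear_R hφ _ x]
  have h6 : M 0 0 * (M.det / M 0 0) = M.det := by field_simp
  rw [h6, ← hdec]

lemma col_nonzero' (r : ℕ) (hn : n = 2 * r) (M : Matrix (Fin 2) (Fin 2) ℚ)
    (hM : M 0 0 ≠ 0 ∨ M 1 0 ≠ 0) (x : Fin n → Fin 2 → ℚ) :
    φ (fun i => M.mulVec (x i)) = M.det ^ r * φ x := by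
  by_cases h0 : M 0 0 ≠ 0
  · exact col_nonzero hφ r hn M h0 x
  · push_neg at h0
    have h10 : M 1 0 ≠ 0 := by tauto
    set M' : Matrix (Fin 2) (Fin 2) ℚ := !![1, 1; 0, 1] * M with hM'
    have h1 : φ (fun i => M.mulVec (x i)) = φ (fun i => M'.mulVec (x i)) :=
      (comp_step _ _ (shear_R hφ 1) x).symm
    have h2 : M' 0 0 ≠ 0 := by
      have he : M' 0 0 = M 0 0 + M 1 0 := by
        simp [hM', Matrix.mul_apply, Matrix.vecMul, dotProduct, Fin.sum_univ_two]
      rw [he, h0, zero_add]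
      exact h10
    have h3 : M'.det = M.det := by
      rw [hM', Matrix.det_mul]
      simp [Matrix.det_fin_two_of]
    rw [h1, col_nonzero hφ r hn M' h2 x, h3]

end

/-- Let `φ` be a ℚ-multilinear map in `2r` arguments from `ℚ²` to `ℚ` which is
invariant under the diagonal action of `SL₂(ℤ)`.  Then for every `2×2` rational
matrix `M`, `φ(M·x₁, …, M·x_{2r}) = (det M)^r · φ(x₁, …, x_{2r})`. -/
theorem statement19 (r : ℕ) (hr : 1 ≤ r)
    (φ : MultilinearMap ℚ (fun _ : Fin (2 * r) => (Fin 2 → ℚ)) ℚ)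
    (hφ : ∀ (A : Matrix.SpecialLinearGroup (Fin 2) ℤ)
        (x : Fin (2 * r) → Fin 2 → ℚ),
      φ (fun i => ((A : Matrix (Fin 2) (Fin 2) ℤ).map (Int.cast : ℤ → ℚ)).mulVec (x i)) = φ x) :
    ∀ (M : Matrix (Fin 2) (Fin 2) ℚ) (x : Fin (2 * r) → Fin 2 → ℚ),
      φ (fun i => M.mulVec (x i)) = M.det ^ r * φ x := by
  intro M x
  set p := evalPoly φ (fun i => M.mulVec (x i)) x with hp
  set q := ((X ^ 2 + C (M 0 0 + M 1 1) * X + C M.det) ^ r * C (φ x) : ℚ[X]) with hq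
  have key : ∀ t : ℚ, t ≠ -(M 0 0) → p.eval t = q.eval t := by
    intro t ht
    have hMt : (M + t • (1 : Matrix (Fin 2) (Fin 2) ℚ)) 0 0 ≠ 0 := by
      simp [Matrix.add_apply, Matrix.smul_apply, Matrix.one_apply]
      intro h; apply ht; linarith
    have h1 : (fun i => M.mulVec (x i) + t • x i)
        = fun i => (M + t • (1 : Matrix (Fin 2) (Fin 2) ℚ)).mulVec (x i) := by
      funext i
      rw [Matrix.add_mulVec, Matrix.smul_mulVec, Matrix.one_mulVec]
    rw [hp, evalPoly_eval, h1, col_nonzero' hφ r rfl _ (Or.inl hMt) x]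
    have hdet : (M + t • (1 : Matrix (Fin 2) (Fin 2) ℚ)).det
        = t ^ 2 + (M 0 0 + M 1 1) * t + M.det := by
      simp [Matrix.det_fin_two, Matrix.add_apply, Matrix.smul_apply, Matrix.one_apply]
      ring
    rw [hdet, hq]
    simp [eval_pow, eval_mul, eval_add, eval_C, eval_X]
  have hinf : {t : ℚ | p.eval t = q.eval t}.Infinite := by
    apply Set.Infinite.mono (s := ({-(M 0 0)}ᶜ : Set ℚ))
    · intro t ht
      exact key t ht
    · exact (Set.finite_singleton _).infinite_compl
  have hpq : p = q := Polynomial.eq_of_infinite_eval_eq _ _ hinf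
  have h0 : p.eval 0 = q.eval 0 := by rw [hpq]
  rw [hp, evalPoly_eval] at h0
  rw [hq] at h0
  simp at h0
  convert h0 using 2
  funext i j
  fin_cases j <;> simp [Matrix.mulVec, dotProduct, Fin.sum_univ_two]
end
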